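/- arXiv:2410.19012 — 5 statements merged into one kernel-verified Lean document; each statement's English description precedes it below -/
import Mathlib

section
/- Let α > 1, ε ≥ 0, and let M be a mechanism from D^n to probability distributions on R satisfying the single-step Rényi-DP consequence: for every pair of neighboring datasets d̃, d̃' and every event E ⊆ R, Pr[M(d̃) ∈ E] ≤ e^{ε(1−1/α)}·(Pr[M(d̃') ∈ E])^{1−1/α}. Then for any datasets d, d' with Hamming distance |d−d'|_H = Δ and any event E ⊆ R, Pr[M(d) ∈ E] ≤ e^{ε·Σ_{i=1}^{Δ}(1−1/α)^i}·(Pr[M(d') ∈ E])^{(1−1/α)^Δ}. -/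
open MeasureTheory
open scoped ENNReal

lemma hamming_step {D : Type*} [DecidableEq D] {n Δ : ℕ} {d d' : Fin n → D}
    (h : hammingDist d d' = Δ + 1) :
    ∃ d'' : Fin n → D, hammingDist d d'' = 1 ∧ hammingDist d'' d' = Δ := by
  classical
  have hne : d ≠ d' := by
    intro he; rw [he, hammingDist_self] at h; omega
  obtain ⟨i, hi⟩ := Function.ne_iff.mp hne
  refine ⟨Function.update d i (d' i), ?_, ?_⟩
  · have : ({j | d j ≠ Function.update d i (d' i) j} : Finset (Fin n)) = {i} := by
      ext j
      simp only [Finset.mem_filter, Finset.mem_univ, true_and, Finset.mem_singleton]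
      rcases eq_or_ne j i with rfl | hji
      · simp [Function.update_self, hi]
      · simp [Function.update_of_ne hji, hji]
    rw [hammingDist, this, Finset.card_singleton]
  · have hset : ({j | Function.update d i (d' i) j ≠ d' j} : Finset (Fin n)) =
        ({j | d j ≠ d' j} : Finset (Fin n)).erase i := by
      ext j
      simp only [Finset.mem_filter, Finset.mem_univ, true_and, Finset.mem_erase]
      rcases eq_or_ne j i with rfl | hji
      · simp [Function.update_self]
      · simp [Function.update_of_ne hji, hji]
    have hmem : i ∈ ({j | d j ≠ d' j} : Finset (Fin n)) := by
      simp [hi]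
    rw [hammingDist, hset, Finset.card_erase_of_mem hmem]
    rw [hammingDist] at h
    omega

lemma sum_Icc_pow_succ (c : ℝ) (Δ : ℕ) :
    ∑ i ∈ Finset.Icc 1 (Δ+1), c ^ i = c * (1 + ∑ i ∈ Finset.Icc 1 Δ, c ^ i) := by
  induction Δ with
  | zero => simp
  | succ k ihk =>
    rw [Finset.sum_Icc_succ_top (by omega : 1 ≤ k + 1)] at ihk
    rw [Finset.sum_Icc_succ_top (by omega : 1 ≤ k + 1 + 1),
      Finset.sum_Icc_succ_top (by omega : 1 ≤ k + 1)]
    linear_combination ihk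

/-- group privacy for Rényi DP, Proposition 2.4, first part.
If for all neighboring datasets `Pr[M(d̃) ∈ E] ≤ e^{ε(1-1/α)}·(Pr[M(d̃') ∈ E])^{1-1/α}`,
then for datasets at Hamming distance `Δ`,
`Pr[M(d) ∈ E] ≤ e^{ε·Σ_{i=1}^{Δ}(1-1/α)^i}·(Pr[M(d') ∈ E])^{(1-1/α)^Δ}`. -/
theorem stmt_3 {D R : Type*} [DecidableEq D] [MeasurableSpace R] {n : ℕ}
    (M : (Fin n → D) → Measure R)
    (hprob : ∀ d, IsProbabilityMeasure (M d))
    (α ε : ℝ) (hα : 1 < α) (hε : 0 ≤ ε)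
    (hRDP : ∀ d d' : Fin n → D, hammingDist d d' = 1 →
      ∀ E : Set R, M d E ≤ ENNReal.ofReal (Real.exp (ε * (1 - 1/α))) * (M d' E) ^ (1 - 1/α))
    (Δ : ℕ) (d d' : Fin n → D) (hdist : hammingDist d d' = Δ) :
    ∀ E : Set R,
      M d E ≤ ENNReal.ofReal (Real.exp (ε * ∑ i ∈ Finset.Icc 1 Δ, (1 - 1/α) ^ i)) *
        (M d' E) ^ ((1 - 1/α) ^ Δ) := by
  have hc0 : (0:ℝ) ≤ 1 - 1/α := by
    have : 1/α ≤ 1 := by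
      rw [div_le_one (by linarith)]; linarith
    linarith
  induction Δ generalizing d with
  | zero =>
    intro E
    have : d = d' := hammingDist_eq_zero.mp hdist
    subst this
    simp [ENNReal.rpow_one]
  | succ Δ ih =>
    intro E
    obtain ⟨d'', h1, h2⟩ := hamming_step hdist
    have step1 := hRDP d d'' h1 E
    have step2 := ih d'' h2 E
    calc M d E ≤ ENNReal.ofReal (Real.exp (ε * (1 - 1/α))) * (M d'' E) ^ (1 - 1/α) := step1
      _ ≤ ENNReal.ofReal (Real.exp (ε * (1 - 1/α))) *
          ((ENNReal.ofReal (Real.exp (ε * ∑ i ∈ Finset.Icc 1 Δ, (1 - 1/α) ^ i)) *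
            (M d' E) ^ ((1 - 1/α) ^ Δ)) ^ (1 - 1/α)) := by
        gcongr
      _ = ENNReal.ofReal (Real.exp (ε * ∑ i ∈ Finset.Icc 1 (Δ+1), (1 - 1/α) ^ i)) *
          (M d' E) ^ ((1 - 1/α) ^ (Δ+1)) := by
        rw [ENNReal.mul_rpow_of_nonneg _ _ hc0, ← ENNReal.rpow_mul, ← mul_assoc,
          ENNReal.ofReal_rpow_of_pos (Real.exp_pos _), ← Real.exp_mul,
          ← ENNReal.ofReal_mul (Real.exp_pos _).le, ← Real.exp_add]
        have hsum : ε * (1 - 1/α) + ε * (∑ i ∈ Finset.Icc 1 Δ, (1 - 1/α) ^ i) * (1 - 1/α)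
            = ε * ∑ i ∈ Finset.Icc 1 (Δ+1), (1 - 1/α) ^ i := by
          have : ∑ i ∈ Finset.Icc 1 (Δ+1), (1 - 1/α) ^ i
              = (1 - 1/α) * (1 + ∑ i ∈ Finset.Icc 1 Δ, (1 - 1/α) ^ i) := by
            exact sum_Icc_pow_succ _ _
          rw [this]; ring
        rw [hsum, ← pow_succ]
end

section
/- Let α > 1, ε ≥ 0, and let M be a mechanism from D^n to probability distributions on R satisfying the single-step Rényi-DP consequence: for every pair of neighboring datasets d̃, d̃' and every event E ⊆ R, Pr[M(d̃) ∈ E] ≤ e^{ε(1−1/α)}·(Pr[M(d̃') ∈ E])^{1−1/α}. Then for any datasets d, d' with Hamming distance |d−d'|_H = Δ, if α ≥ Δ+1, then for any event E ⊆ R, Pr[M(d) ∈ E] ≤ e^{(α−1)ε}·(Pr[M(d') ∈ E])^{1/e}. -/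
open MeasureTheory Finset
open scoped ENNReal

lemma my_exists_mid {D : Type*} [DecidableEq D] {n : ℕ} {d d' : Fin n → D} {k : ℕ}
    (h : hammingDist d d' = k + 1) :
    ∃ d'' : Fin n → D, hammingDist d d'' = 1 ∧ hammingDist d'' d' = k := by
  classical
  have hpos : 0 < (Finset.univ.filter fun i => d i ≠ d' i).card := by
    rw [show (Finset.univ.filter fun i => d i ≠ d' i).card = hammingDist d d' from rfl, h]
    omega
  obtain ⟨i, hi⟩ := Finset.card_pos.mp hpos
  have hid : d i ≠ d' i := (Finset.mem_filter.mp hi).2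
  refine ⟨Function.update d i (d' i), ?_, ?_⟩
  · have : (Finset.univ.filter fun j => d j ≠ Function.update d i (d' i) j) = {i} := by
      ext j
      rcases eq_or_ne j i with rfl | hj
      · simp [Function.update_self, hid]
      · simp [Function.update_of_ne hj, hj]
    rw [show hammingDist d (Function.update d i (d' i))
        = (Finset.univ.filter fun j => d j ≠ Function.update d i (d' i) j).card from rfl, this,
      Finset.card_singleton]
  · have : (Finset.univ.filter fun j => Function.update d i (d' i) j ≠ d' j)
        = (Finset.univ.filter fun j => d j ≠ d' j).erase i := by
      ext j
      rcases eq_or_ne j i with rfl | hj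
      · simp [Function.update_self]
      · simp [Function.update_of_ne hj, hj]
    rw [show hammingDist (Function.update d i (d' i)) d'
        = (Finset.univ.filter fun j => Function.update d i (d' i) j ≠ d' j).card from rfl, this,
      Finset.card_erase_of_mem hi,
      show (Finset.univ.filter fun j => d j ≠ d' j).card = hammingDist d d' from rfl, h]
    omega

/-- group privacy for Rényi DP, Proposition 2.4, second part.
Under the single-step Rényi-DP consequence, for datasets at Hamming distance `Δ` with
`α ≥ Δ + 1`, `Pr[M(d) ∈ E] ≤ e^{(α-1)ε}·(Pr[M(d') ∈ E])^{1/e}`. -/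
theorem stmt_4 {D R : Type*} [DecidableEq D] [MeasurableSpace R] {n : ℕ}
    (M : (Fin n → D) → Measure R)
    (hprob : ∀ d, IsProbabilityMeasure (M d))
    (α ε : ℝ) (hα : 1 < α) (hε : 0 ≤ ε)
    (hRDP : ∀ d d' : Fin n → D, hammingDist d d' = 1 →
      ∀ E : Set R, M d E ≤ ENNReal.ofReal (Real.exp (ε * (1 - 1/α))) * (M d' E) ^ (1 - 1/α))
    (Δ : ℕ) (d d' : Fin n → D) (hdist : hammingDist d d' = Δ)
    (hαΔ : (Δ : ℝ) + 1 ≤ α) :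
    ∀ E : Set R,
      M d E ≤ ENNReal.ofReal (Real.exp ((α - 1) * ε)) * (M d' E) ^ (1 / Real.exp 1) := by
  intro E
  set c : ℝ := 1 - 1/α with hc
  have hαpos : 0 < α := lt_trans one_pos hα
  have hα' : 1/α < 1 := by rw [div_lt_one hαpos]; exact hα
  have hc0 : 0 < c := by rw [hc]; linarith
  have hc1 : c ≤ 1 := by rw [hc]; have : 0 < 1/α := by positivity
                         linarith
  -- main induction
  have key : ∀ k : ℕ, ∀ d d' : Fin n → D, hammingDist d d' = k →
      M d E ≤ ENNReal.ofReal (Real.exp (ε * c * k)) * (M d' E) ^ (c ^ k) := by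
    intro k
    induction k with
    | zero =>
      intro d d' h
      have : d = d' := hammingDist_eq_zero.mp h
      subst this
      simp
    | succ k ih =>
      intro d d' h
      obtain ⟨dm, h1, hk⟩ := my_exists_mid h
      have step := hRDP d dm h1 E
      have ihm := ih dm d' hk
      have hmono : (M dm E) ^ c ≤ (ENNReal.ofReal (Real.exp (ε * c * k)) * (M d' E) ^ (c ^ k)) ^ c :=
        ENNReal.rpow_le_rpow ihm hc0.le
      rw [ENNReal.mul_rpow_of_nonneg _ _ hc0.le, ← ENNReal.rpow_mul,
        ENNReal.ofReal_rpow_of_pos (Real.exp_pos _),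
        Real.rpow_def_of_pos (Real.exp_pos _), Real.log_exp] at hmono
      have h2 := step.trans (mul_le_mul_right hmono _)
      refine le_trans h2 ?_
      rw [← mul_assoc, ← ENNReal.ofReal_mul (Real.exp_pos _).le, ← Real.exp_add, pow_succ]
      refine mul_le_mul' (ENNReal.ofReal_le_ofReal (Real.exp_le_exp.mpr ?_)) le_rfl
      have hnn : 0 ≤ ε * c * (k:ℝ) := by positivity
      have hk0 : (0:ℝ) ≤ (k:ℝ) := Nat.cast_nonneg _
      push_cast
      nlinarith [mul_le_of_le_one_right hnn hc1]
  have main := key Δ d d' hdist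
  have hPle1 : M d' E ≤ 1 := prob_le_one
  -- coefficient bound: ε * c * Δ ≤ (α - 1) * ε
  have hcoef : ε * c * Δ ≤ (α - 1) * ε := by
    have hΔα : (Δ : ℝ) ≤ α - 1 := by linarith
    have : c * Δ ≤ α - 1 := by
      have h0 : (0:ℝ) ≤ Δ := Nat.cast_nonneg _
      nlinarith
    nlinarith
  -- exponent bound: 1 / e ≤ c ^ Δ
  have hexp : Real.exp (-1) ≤ c ^ Δ := by
    rcases Nat.eq_zero_or_pos Δ with h0 | h0
    · rw [h0, pow_zero]
      calc Real.exp (-1) ≤ Real.exp 0 := Real.exp_le_exp.mpr (by norm_num)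
        _ = 1 := Real.exp_zero
    · have hΔpos : (0:ℝ) < Δ := Nat.cast_pos.mpr h0
      have hα1 : (0:ℝ) < α - 1 := by linarith
      have hcval : c = (α - 1)/α := by rw [hc]; field_simp
      have hinv : 1/c = 1 + 1/(α-1) := by rw [hcval]; field_simp; ring
      have hpos : (0:ℝ) < 1 + 1/(α-1) := by positivity
      have hlog1 : Real.log (1/c) ≤ 1/(α-1) := by
        rw [hinv]
        have := Real.log_le_sub_one_of_pos hpos
        linarith
      have hΔle : (Δ:ℝ) ≤ α - 1 := by linarith
      have hmul : (Δ:ℝ) * Real.log (1/c) ≤ 1 :=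
        calc (Δ:ℝ) * Real.log (1/c) ≤ (Δ:ℝ) * (1/(α-1)) :=
              mul_le_mul_of_nonneg_left hlog1 hΔpos.le
          _ = (Δ:ℝ) / (α-1) := by ring
          _ ≤ 1 := (div_le_one hα1).mpr hΔle
      have hlogc : Real.log c = - Real.log (1/c) := by
        rw [one_div, Real.log_inv]; ring
      have hfin : -1 ≤ (Δ:ℝ) * Real.log c := by rw [hlogc]; linarith
      calc Real.exp (-1) ≤ Real.exp ((Δ:ℝ) * Real.log c) := Real.exp_le_exp.mpr hfin
        _ = c ^ Δ := by
          rw [← Real.log_pow, Real.exp_log (by positivity)]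
  -- finish
  calc M d E ≤ ENNReal.ofReal (Real.exp (ε * c * Δ)) * (M d' E) ^ (c ^ Δ) := main
    _ ≤ ENNReal.ofReal (Real.exp ((α - 1) * ε)) * (M d' E) ^ (1 / Real.exp 1) := by
      refine mul_le_mul' (ENNReal.ofReal_le_ofReal (Real.exp_le_exp.mpr hcoef)) ?_
      apply ENNReal.rpow_le_rpow_of_exponent_ge hPle1
      rw [one_div, ← Real.exp_neg]
      exact hexp
end

section
/- (Extension Lemma) Let ε ≥ 0, let B ⊆ D^n be a set of datasets, and let M_B assign to each d ∈ B a probability distribution on a countable output space R such that for all d, d' ∈ B and all events S ⊆ R, Pr[M_B(d) ∈ S] ≤ e^{ε·|d−d'|_H}·Pr[M_B(d') ∈ S]. Then there exists a mechanism M defined on all of D^n which is 2ε-differentially private and such that for every d ∈ B, M(d) has the same distribution as M_B(d). -/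
open MeasureTheory
open scoped ENNReal

section AuxExtension

variable {D R : Type*} [DecidableEq D] [MeasurableSpace R] [Countable R]
  [MeasurableSingletonClass R] {n : ℕ}

/-- The (unnormalized) extension density. -/
noncomputable def uFun (ε : ℝ) (B : Set (Fin n → D)) (MB : (Fin n → D) → Measure R)
    (d : Fin n → D) (r : R) : ℝ≥0∞ :=
  ⨅ d' : B, ENNReal.ofReal (Real.exp (ε * hammingDist d (d' : Fin n → D))) * MB d' {r}

/-- The unnormalized extension measure. -/
noncomputable def nuMeas (ε : ℝ) (B : Set (Fin n → D)) (MB : (Fin n → D) → Measure R)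
    (d : Fin n → D) : Measure R :=
  Measure.sum (fun r => uFun ε B MB d r • Measure.dirac r)

lemma ofReal_exp_ne_zero (x : ℝ) : ENNReal.ofReal (Real.exp x) ≠ 0 :=
  (ENNReal.ofReal_pos.mpr (Real.exp_pos x)).ne'

lemma uFun_mem {ε : ℝ} (hε : 0 ≤ ε) {B : Set (Fin n → D)} {MB : (Fin n → D) → Measure R}
    (hDP : ∀ d ∈ B, ∀ d' ∈ B, ∀ S : Set R,
      MB d S ≤ ENNReal.ofReal (Real.exp (ε * hammingDist d d')) * MB d' S)
    {d : Fin n → D} (hd : d ∈ B) (r : R) : uFun ε B MB d r = MB d {r} := by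
  apply le_antisymm
  · have h := iInf_le (fun d' : B => ENNReal.ofReal
      (Real.exp (ε * hammingDist d (d' : Fin n → D))) * MB d' {r}) ⟨d, hd⟩
    simpa [uFun, hammingDist_self] using h
  · exact le_iInf fun d' => hDP d hd d' d'.2 {r}

lemma uFun_le {ε : ℝ} (hε : 0 ≤ ε) {B : Set (Fin n → D)} (hB : B.Nonempty)
    {MB : (Fin n → D) → Measure R} (d e : Fin n → D) (r : R) :
    uFun ε B MB d r ≤ ENNReal.ofReal (Real.exp (ε * hammingDist d e)) * uFun ε B MB e r := by
  have : Nonempty B := hB.to_subtype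
  simp only [uFun]
  rw [ENNReal.mul_iInf_of_ne (ofReal_exp_ne_zero _) ENNReal.ofReal_ne_top]
  refine le_iInf fun d' => ?_
  refine le_trans (iInf_le _ d') ?_
  rw [← mul_assoc, ← ENNReal.ofReal_mul (Real.exp_pos _).le, ← Real.exp_add]
  refine mul_le_mul_left (ENNReal.ofReal_le_ofReal (Real.exp_le_exp.mpr ?_)) _
  have h := hammingDist_triangle d e (d' : Fin n → D)
  rw [← mul_add]
  exact mul_le_mul_of_nonneg_left (by exact_mod_cast h) hε

lemma nuMeas_apply (ε : ℝ) (B : Set (Fin n → D)) (MB : (Fin n → D) → Measure R)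
    (d : Fin n → D) (S : Set R) :
    nuMeas ε B MB d S = ∑' r, S.indicator (uFun ε B MB d) r := by
  rw [nuMeas, Measure.sum_apply _ S.to_countable.measurableSet]
  refine tsum_congr fun r => ?_
  by_cases h : r ∈ S <;>
    simp [Measure.smul_apply, Measure.dirac_apply, Set.indicator_of_mem,
      Set.indicator_of_notMem, h]

lemma nuMeas_eq {ε : ℝ} (hε : 0 ≤ ε) {B : Set (Fin n → D)} {MB : (Fin n → D) → Measure R}
    (hDP : ∀ d ∈ B, ∀ d' ∈ B, ∀ S : Set R,
      MB d S ≤ ENNReal.ofReal (Real.exp (ε * hammingDist d d')) * MB d' S)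
    {d : Fin n → D} (hd : d ∈ B) : nuMeas ε B MB d = MB d := by
  have h : ∀ r, uFun ε B MB d r = MB d {r} := uFun_mem hε hDP hd
  rw [nuMeas]
  simp only [h]
  exact Measure.sum_smul_dirac (MB d)

lemma nuMeas_le {ε : ℝ} (hε : 0 ≤ ε) {B : Set (Fin n → D)} (hB : B.Nonempty)
    {MB : (Fin n → D) → Measure R} (d e : Fin n → D) (S : Set R) :
    nuMeas ε B MB d S ≤ ENNReal.ofReal (Real.exp (ε * hammingDist d e)) * nuMeas ε B MB e S := by
  rw [nuMeas_apply, nuMeas_apply, ← ENNReal.tsum_mul_left]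
  refine Summable.tsum_le_tsum (fun r => ?_) ENNReal.summable ENNReal.summable
  by_cases h : r ∈ S
  · simpa [Set.indicator_of_mem h] using uFun_le hε hB d e r
  · simp [Set.indicator_of_notMem h]

end AuxExtension

/-- Extension Lemma, Proposition 2.1, due to Borgs et al..
A partial mechanism `M_B` defined on `B ⊆ D^n` with countable output space satisfying
`Pr[M_B(d) ∈ S] ≤ e^{ε·|d-d'|_H}·Pr[M_B(d') ∈ S]` for all `d, d' ∈ B` extends to a
`2ε`-DP mechanism `M` on all of `D^n` agreeing with `M_B` on `B`. -/
theorem stmt_7 {D R : Type*} [DecidableEq D] [MeasurableSpace R] [Countable R]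
    [MeasurableSingletonClass R] [Nonempty R] {n : ℕ}
    (ε : ℝ) (hε : 0 ≤ ε) (B : Set (Fin n → D))
    (MB : (Fin n → D) → Measure R)
    (hprob : ∀ d ∈ B, IsProbabilityMeasure (MB d))
    (hDP : ∀ d ∈ B, ∀ d' ∈ B, ∀ S : Set R,
      MB d S ≤ ENNReal.ofReal (Real.exp (ε * hammingDist d d')) * MB d' S) :
    ∃ M : (Fin n → D) → Measure R,
      (∀ d, IsProbabilityMeasure (M d)) ∧
      (∀ d d' : Fin n → D, hammingDist d d' = 1 →
        ∀ S : Set R, M d S ≤ ENNReal.ofReal (Real.exp (2 * ε)) * M d' S) ∧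
      (∀ d ∈ B, M d = MB d) := by
  rcases B.eq_empty_or_nonempty with hB | hB
  · subst hB
    obtain ⟨r₀⟩ := ‹Nonempty R›
    refine ⟨fun _ => Measure.dirac r₀, fun _ => inferInstance, ?_, ?_⟩
    · intro d d' _ S
      have h1 : (1 : ℝ≥0∞) ≤ ENNReal.ofReal (Real.exp (2 * ε)) := by
        rw [show (1 : ℝ≥0∞) = ENNReal.ofReal 1 by simp]
        exact ENNReal.ofReal_le_ofReal (Real.one_le_exp (by positivity))
      calc Measure.dirac r₀ S = 1 * Measure.dirac r₀ S := (one_mul _).symm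
        _ ≤ _ := mul_le_mul_left h1 _
    · intro d hd; simp at hd
  · obtain ⟨d₀, hd₀⟩ := hB
    have hBne : B.Nonempty := ⟨d₀, hd₀⟩
    set Z : (Fin n → D) → ℝ≥0∞ := fun d => nuMeas ε B MB d Set.univ with hZ
    have hZle : ∀ d e : Fin n → D,
        Z d ≤ ENNReal.ofReal (Real.exp (ε * hammingDist d e)) * Z e :=
      fun d e => nuMeas_le hε hBne d e Set.univ
    have hZB : ∀ d ∈ B, Z d = 1 := by
      intro d hd
      have := hprob d hd
      rw [hZ]; simp only [nuMeas_eq hε hDP hd]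
      exact measure_univ
    have hZne : ∀ d, Z d ≠ 0 := by
      intro d h0
      have h1 := hZle d₀ d
      rw [hZB d₀ hd₀, h0, mul_zero] at h1
      exact one_ne_zero (le_antisymm h1 zero_le)
    have hZnt : ∀ d, Z d ≠ ∞ := by
      intro d
      have h1 := hZle d d₀
      rw [hZB d₀ hd₀, mul_one] at h1
      exact (h1.trans_lt ENNReal.ofReal_lt_top).ne
    refine ⟨fun d => (Z d)⁻¹ • nuMeas ε B MB d, ?_, ?_, ?_⟩
    · intro d
      constructor
      rw [Measure.smul_apply, smul_eq_mul]
      exact ENNReal.inv_mul_cancel (hZne d) (hZnt d)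
    · intro d d' hdist S
      simp only [Measure.smul_apply, smul_eq_mul]
      set c := ENNReal.ofReal (Real.exp ε) with hc
      have hcε : ENNReal.ofReal (Real.exp (ε * (hammingDist d d' : ℕ))) = c := by
        rw [hdist]; norm_num; rfl
      have hcε' : ENNReal.ofReal (Real.exp (ε * (hammingDist d' d : ℕ))) = c := by
        rw [hammingDist_comm, hdist]; norm_num; rfl
      have hnu : nuMeas ε B MB d S ≤ c * nuMeas ε B MB d' S := by
        rw [← hcε]; exact nuMeas_le hε hBne d d' S
      have hZ' : Z d' ≤ c * Z d := by rw [← hcε']; exact hZle d' d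
      have hcne : c ≠ 0 := ofReal_exp_ne_zero ε
      have hcnt : c ≠ ∞ := ENNReal.ofReal_ne_top
      have hinv : (Z d)⁻¹ ≤ c * (Z d')⁻¹ := by
        have h2 : (c * Z d)⁻¹ ≤ (Z d')⁻¹ := ENNReal.inv_le_inv.mpr hZ'
        have h3 : (c * Z d)⁻¹ = c⁻¹ * (Z d)⁻¹ :=
          ENNReal.mul_inv (Or.inl hcne) (Or.inl hcnt)
        calc (Z d)⁻¹ = c * (c⁻¹ * (Z d)⁻¹) := by
              rw [← mul_assoc, ENNReal.mul_inv_cancel hcne hcnt, one_mul]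
          _ ≤ c * (Z d')⁻¹ := mul_le_mul_right (h3 ▸ h2) c
      have h2ε : ENNReal.ofReal (Real.exp (2 * ε)) = c * c := by
        rw [hc, ← ENNReal.ofReal_mul (Real.exp_pos _).le, ← Real.exp_add, two_mul]
      calc (Z d)⁻¹ * nuMeas ε B MB d S
          ≤ (c * (Z d')⁻¹) * (c * nuMeas ε B MB d' S) :=
            mul_le_mul' hinv hnu
        _ = (c * c) * ((Z d')⁻¹ * nuMeas ε B MB d' S) := by ring
        _ = ENNReal.ofReal (Real.exp (2 * ε)) * ((Z d')⁻¹ * nuMeas ε B MB d' S) := by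
            rw [h2ε]
    · intro d hd
      show (Z d)⁻¹ • nuMeas ε B MB d = MB d
      rw [hZB d hd, nuMeas_eq hε hDP hd]
      simp
end

section
/- (Advanced composition) Let M be an (ε,δ)-differentially private mechanism from D^n to probability distributions on an output space R, and let T be a positive integer. Then for every δ' ∈ (0,1), the mechanism that maps d to the joint distribution of T independent draws (Y_1, …, Y_T) from M(d) is (Tε² + ε·√(2T·ln(1/δ')), Tδ + δ')-differentially private. -/
open MeasureTheory
open scoped ENNReal

namespace Stmt12Aux

lemma sinh_le_mul_cosh {t : ℝ} (ht : 0 ≤ t) : Real.sinh t ≤ t * Real.cosh t := by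
  have key : MonotoneOn (fun t : ℝ => t * Real.cosh t - Real.sinh t) (Set.Ici 0) := by
    apply monotoneOn_of_deriv_nonneg (convex_Ici 0)
    · fun_prop
    · intro x hx
      exact (((hasDerivAt_id x).mul (Real.hasDerivAt_cosh x)).sub
        (Real.hasDerivAt_sinh x)).differentiableAt.differentiableWithinAt
    · intro x hx
      rw [interior_Ici] at hx
      have hd : HasDerivAt (fun t : ℝ => t * Real.cosh t - Real.sinh t)
          (1 * Real.cosh x + x * Real.sinh x - Real.cosh x) x :=
        ((hasDerivAt_id x).mul (Real.hasDerivAt_cosh x)).sub (Real.hasDerivAt_sinh x)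
      rw [hd.deriv]
      have hs : 0 ≤ Real.sinh x := (Real.sinh_pos_iff.2 hx).le
      have hxs : 0 ≤ x * Real.sinh x := mul_nonneg (le_of_lt hx) hs
      linarith
  have h0 := key (Set.self_mem_Ici) (Set.mem_Ici.2 ht) ht
  simpa using h0

lemma cosh_ratio {u v : ℝ} (hv : 0 ≤ v) (huv : v ≤ u) :
    Real.cosh u ≤ Real.cosh v * Real.exp ((u ^ 2 - v ^ 2) / 2) := by
  have key : AntitoneOn (fun t : ℝ => Real.log (Real.cosh t) - t ^ 2 / 2) (Set.Ici 0) := by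
    apply antitoneOn_of_deriv_nonpos (convex_Ici 0)
    · apply ContinuousOn.sub
      · exact (Real.continuous_cosh.continuousOn).log fun x _ => (Real.cosh_pos x).ne'
      · fun_prop
    · intro x hx
      have hd : HasDerivAt (fun t : ℝ => Real.log (Real.cosh t) - t ^ 2 / 2)
          (Real.sinh x / Real.cosh x - x) x := by
        have h1 : HasDerivAt (fun t : ℝ => Real.log (Real.cosh t))
            (Real.sinh x / Real.cosh x) x :=
          (Real.hasDerivAt_cosh x).log (Real.cosh_pos x).ne'
        have h2 : HasDerivAt (fun t : ℝ => t ^ 2 / 2) x x := by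
          have := ((hasDerivAt_pow 2 x).div_const 2)
          simpa using this
        exact h1.sub h2
      exact hd.differentiableAt.differentiableWithinAt
    · intro x hx
      rw [interior_Ici] at hx
      have hd : HasDerivAt (fun t : ℝ => Real.log (Real.cosh t) - t ^ 2 / 2)
          (Real.sinh x / Real.cosh x - x) x := by
        have h1 : HasDerivAt (fun t : ℝ => Real.log (Real.cosh t))
            (Real.sinh x / Real.cosh x) x :=
          (Real.hasDerivAt_cosh x).log (Real.cosh_pos x).ne'
        have h2 : HasDerivAt (fun t : ℝ => t ^ 2 / 2) x x := by
          have := ((hasDerivAt_pow 2 x).div_const 2)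
          simpa using this
        exact h1.sub h2
      rw [hd.deriv]
      have h3 : Real.sinh x ≤ x * Real.cosh x := sinh_le_mul_cosh (le_of_lt hx)
      have h4 := Real.cosh_pos x
      rw [sub_nonpos, div_le_iff₀ h4]
      exact h3
  have h0 := key (Set.mem_Ici.2 hv) (Set.mem_Ici.2 (hv.trans huv)) huv
  have hcu := Real.cosh_pos u
  have hcv := Real.cosh_pos v
  have : Real.log (Real.cosh u) ≤ Real.log (Real.cosh v) + (u ^ 2 - v ^ 2) / 2 := by
    simp only at h0; linarith
  calc Real.cosh u = Real.exp (Real.log (Real.cosh u)) := (Real.exp_log hcu).symm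
    _ ≤ Real.exp (Real.log (Real.cosh v) + (u ^ 2 - v ^ 2) / 2) := Real.exp_le_exp.2 this
    _ = Real.cosh v * Real.exp ((u ^ 2 - v ^ 2) / 2) := by
        rw [Real.exp_add, Real.exp_log hcv]

lemma convexOn_rpow_neg {l : ℝ} (hl : 0 ≤ l) :
    ConvexOn ℝ (Set.Ioi (0 : ℝ)) fun y : ℝ => y ^ (-l) := by
  apply convexOn_of_hasDerivWithinAt2_nonneg (f' := fun y => (-l) * y ^ (-l - 1))
    (f'' := fun y => (-l) * ((-l - 1) * y ^ (-l - 2))) (convex_Ioi 0)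
  · apply ContinuousOn.rpow_const continuousOn_id
    intro x hx; exact Or.inl (ne_of_gt hx)
  · intro x hx
    rw [interior_Ioi] at hx
    exact (Real.hasDerivAt_rpow_const (Or.inl (ne_of_gt hx))).hasDerivWithinAt
  · intro x hx
    rw [interior_Ioi] at hx
    have h := (Real.hasDerivAt_rpow_const (p := -l - 1) (Or.inl (ne_of_gt hx))).const_mul (-l)
    have harg : -l - 1 - 1 = -l - 2 := by ring
    rw [harg] at h
    exact h.hasDerivWithinAt
  · intro x hx
    rw [interior_Ioi] at hx
    have h1 : (0:ℝ) ≤ x ^ (-l - 2) := Real.rpow_nonneg (le_of_lt hx) _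
    have h2 : -l * ((-l - 1) * x ^ (-l - 2)) = l * (l + 1) * x ^ (-l - 2) := by ring
    rw [h2]
    positivity

lemma chord_bound {ε l y : ℝ} (hε : 0 < ε) (hl : 0 ≤ l)
    (h1 : Real.exp (-ε) ≤ y) (h2 : y ≤ Real.exp ε) :
    y ^ (-l) + ((Real.exp (l * ε) - Real.exp (-(l * ε))) / (Real.exp ε - Real.exp (-ε))) * y
      ≤ (Real.exp ε * Real.exp (l * ε) - Real.exp (-ε) * Real.exp (-(l * ε)))
          / (Real.exp ε - Real.exp (-ε)) := by
  set el := Real.exp (-ε) with hel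
  set er := Real.exp ε with her
  have hd : 0 < er - el := by
    have : el < er := Real.exp_lt_exp.2 (by linarith)
    linarith
  have hel0 : 0 < el := Real.exp_pos _
  have hy0 : 0 < y := lt_of_lt_of_le hel0 h1
  have ha : 0 ≤ (er - y) / (er - el) := div_nonneg (by linarith) (le_of_lt hd)
  have hb : 0 ≤ (y - el) / (er - el) := div_nonneg (by linarith) (le_of_lt hd)
  have hab : (er - y) / (er - el) + (y - el) / (er - el) = 1 := by
    field_simp
    ring
  have hcomb : ((er - y) / (er - el)) • el + ((y - el) / (er - el)) • er = y := by
    rw [smul_eq_mul, smul_eq_mul, div_mul_eq_mul_div, div_mul_eq_mul_div, ← add_div,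
      div_eq_iff hd.ne']
    ring
  have hconv := (convexOn_rpow_neg hl).2 (Set.mem_Ioi.2 hel0)
    (Set.mem_Ioi.2 (lt_of_lt_of_le hel0 (by linarith : el ≤ er))) ha hb hab
  rw [hcomb] at hconv
  simp only [smul_eq_mul] at hconv
  have hfel : el ^ (-l) = Real.exp (l * ε) := by
    rw [hel, ← Real.exp_mul]; congr 1; ring
  have hfer : er ^ (-l) = Real.exp (-(l * ε)) := by
    rw [her, ← Real.exp_mul]; congr 1; ring
  rw [hfel, hfer] at hconv
  have heq : (er - y) / (er - el) * Real.exp (l * ε) + (y - el) / (er - el) * Real.exp (-(l * ε))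
      + ((Real.exp (l * ε) - Real.exp (-(l * ε))) / (er - el)) * y
      = (er * Real.exp (l * ε) - el * Real.exp (-(l * ε))) / (er - el) := by
    field_simp
    ring
  linarith

lemma G_bound {ε l : ℝ} (hε : 0 < ε) (hl : 0 ≤ l) :
    (Real.exp ε * Real.exp (l * ε) - Real.exp (-ε) * Real.exp (-(l * ε)))
        / (Real.exp ε - Real.exp (-ε))
      - (Real.exp (l * ε) - Real.exp (-(l * ε))) / (Real.exp ε - Real.exp (-ε))
      ≤ Real.exp ((l ^ 2 + l) * ε ^ 2 / 2) := by
  set u := (l + 1 / 2) * ε with hu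
  set v := ε / 2 with hv
  have e1 : Real.exp u * Real.exp v = Real.exp ε * Real.exp (l * ε) := by
    rw [← Real.exp_add, ← Real.exp_add]; congr 1; rw [hu, hv]; ring
  have e2 : Real.exp (-u) * Real.exp v = Real.exp (-(l * ε)) := by
    rw [← Real.exp_add]; congr 1; rw [hu, hv]; ring
  have e3 : Real.exp u * Real.exp (-v) = Real.exp (l * ε) := by
    rw [← Real.exp_add]; congr 1; rw [hu, hv]; ring
  have e4 : Real.exp (-u) * Real.exp (-v) = Real.exp (-ε) * Real.exp (-(l * ε)) := by
    rw [← Real.exp_add, ← Real.exp_add]; congr 1; rw [hu, hv]; ring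
  have e5 : Real.exp v * Real.exp v = Real.exp ε := by
    rw [← Real.exp_add]; congr 1; rw [hv]; ring
  have e6 : Real.exp (-v) * Real.exp (-v) = Real.exp (-ε) := by
    rw [← Real.exp_add]; congr 1; rw [hv]; ring
  have key1 : Real.exp ε * Real.exp (l * ε) - Real.exp (-ε) * Real.exp (-(l * ε))
      - (Real.exp (l * ε) - Real.exp (-(l * ε))) = 4 * Real.cosh u * Real.sinh v := by
    rw [Real.cosh_eq, Real.sinh_eq]
    linear_combination -e1 + e3 - e2 + e4
  have key2 : Real.exp ε - Real.exp (-ε) = 4 * Real.sinh v * Real.cosh v := by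
    rw [Real.sinh_eq, Real.cosh_eq]
    linear_combination -e5 + e6
  have hsv : 0 < Real.sinh v := by
    rw [Real.sinh_pos_iff]; rw [hv]; linarith
  have hcv := Real.cosh_pos v
  have hcu := Real.cosh_pos u
  rw [div_sub_div_same, key1, key2]
  have hne : (4 : ℝ) * Real.sinh v ≠ 0 := by positivity
  have hsimp : 4 * Real.cosh u * Real.sinh v / (4 * Real.sinh v * Real.cosh v)
      = Real.cosh u / Real.cosh v := by
    field_simp
  rw [hsimp]
  have hratio := cosh_ratio (by rw [hv]; linarith : (0:ℝ) ≤ v)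
    (by rw [hu, hv]; nlinarith : v ≤ u)
  rw [div_le_iff₀ hcv]
  have harg : (u ^ 2 - v ^ 2) / 2 = (l ^ 2 + l) * ε ^ 2 / 2 := by
    rw [hu, hv]; ring
  rw [harg] at hratio
  linarith [hratio]



lemma lintegral_pi_prod {α : Type*} [MeasurableSpace α] :
    ∀ (m : ℕ) (μ : Fin m → Measure α), (∀ i, SigmaFinite (μ i)) →
    ∀ (f : Fin m → α → ℝ≥0∞), (∀ i, Measurable (f i)) →
      ∫⁻ x, ∏ i, f i (x i) ∂Measure.pi μ = ∏ i, ∫⁻ a, f i a ∂(μ i) := by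
  intro m
  induction m with
  | zero =>
    intro μ _ f hf
    rw [Measure.pi_of_empty]
    simp
  | succ k ih =>
    intro μ hsf f hf
    haveI := hsf
    have hmp := measurePreserving_piFinSuccAbove μ 0
    have hrw := (MeasurePreserving.symm _ hmp).lintegral_map_equiv (fun x => ∏ i, f i (x i))
      (MeasurableEquiv.piFinSuccAbove (fun _ : Fin (k+1) => α) 0).symm
    rw [hrw]
    have hpt : ∀ z : α × (Fin k → α),
        (∏ i, f i (((MeasurableEquiv.piFinSuccAbove (fun _ : Fin (k+1) => α) 0).symm z) i))
        = f 0 z.1 * ∏ j : Fin k, f ((0 : Fin (k+1)).succAbove j) (z.2 j) := by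
      intro z
      rw [Fin.prod_univ_succAbove (fun i =>
        f i (((MeasurableEquiv.piFinSuccAbove (fun _ : Fin (k+1) => α) 0).symm z) i)) 0]
      simp [MeasurableEquiv.piFinSuccAbove_symm_apply]
    simp_rw [hpt]
    have hg : AEMeasurable (fun y : Fin k → α => ∏ j : Fin k, f ((0 : Fin (k+1)).succAbove j) (y j))
        (Measure.pi fun j => μ (Fin.succAbove 0 j)) :=
      (Finset.measurable_prod Finset.univ fun j _ =>
        (hf _).comp (measurable_pi_apply j)).aemeasurable
    calc ∫⁻ (z : α × (Fin k → α)), f 0 z.1 * ∏ j : Fin k, f (Fin.succAbove 0 j) (z.2 j)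
          ∂(μ 0).prod (Measure.pi fun j => μ (Fin.succAbove 0 j))
        = (∫⁻ a, f 0 a ∂μ 0) * ∫⁻ y, ∏ j : Fin k, f ((0 : Fin (k+1)).succAbove j) (y j)
            ∂(Measure.pi fun j => μ (Fin.succAbove 0 j)) :=
        lintegral_prod_mul (hf 0).aemeasurable hg
      _ = ∏ i, ∫⁻ a, f i a ∂(μ i) := by
        rw [ih (fun j => μ ((0 : Fin (k+1)).succAbove j)) (fun j => inferInstance)
          (fun j => f ((0 : Fin (k+1)).succAbove j)) (fun j => hf _)]
        rw [Fin.prod_univ_succAbove (fun i => ∫⁻ a, f i a ∂(μ i)) 0]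

lemma withDensity_pi {α : Type*} [MeasurableSpace α] (μ : Measure α) [SigmaFinite μ]
    (f : α → ℝ≥0∞) (hf : Measurable f) (hfin : ∫⁻ a, f a ∂μ ≠ ∞) (m : ℕ) :
    Measure.pi (fun _ : Fin m => μ.withDensity f)
      = (Measure.pi fun _ : Fin m => μ).withDensity (fun x => ∏ i, f (x i)) := by
  haveI : IsFiniteMeasure (μ.withDensity f) := isFiniteMeasure_withDensity hfin
  refine (Measure.pi_eq fun s hs => ?_)
  have hprodmeas : Measurable fun x : Fin m → α => ∏ i, f (x i) :=
    Finset.measurable_prod Finset.univ fun j _ => hf.comp (measurable_pi_apply j)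
  rw [withDensity_apply _ (MeasurableSet.univ_pi hs), ← lintegral_indicator
    (MeasurableSet.univ_pi hs)]
  have hpt : ∀ x : Fin m → α, (Set.univ.pi s).indicator (fun x => ∏ i, f (x i)) x
      = ∏ i, (f (x i) * (s i).indicator (fun _ => 1) (x i)) := by
    intro x
    by_cases hx : x ∈ Set.univ.pi s
    · rw [Set.indicator_of_mem hx]
      apply Finset.prod_congr rfl
      intro j _
      rw [Set.indicator_of_mem (hx j (Set.mem_univ j))]
      rw [mul_one]
    · rw [Set.indicator_of_notMem hx]
      rw [Set.mem_univ_pi] at hx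
      push_neg at hx
      obtain ⟨j, hj⟩ := hx
      symm
      apply Finset.prod_eq_zero (Finset.mem_univ j)
      rw [Set.indicator_of_notMem hj, mul_zero]
  simp_rw [hpt]
  rw [lintegral_pi_prod m _ (fun i => inferInstance) (fun i a => f a * (s i).indicator (fun _ => 1) a)
    (fun i => hf.mul (measurable_const.indicator (hs i)))]
  apply Finset.prod_congr rfl
  intro j _
  rw [withDensity_apply _ (hs j), ← lintegral_indicator (hs j)]
  congr 1
  ext a
  by_cases ha : a ∈ s j
  · rw [Set.indicator_of_mem ha, Set.indicator_of_mem ha, mul_one]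
  · rw [Set.indicator_of_notMem ha, Set.indicator_of_notMem ha, mul_zero]



lemma decomp {α : Type*} [MeasurableSpace α] (μ : Measure α) (p q : α → ℝ≥0∞)
    (hp : Measurable p) (hq : Measurable q)
    (hqfin : ∀ a, q a ≠ ∞)
    (hintp : ∫⁻ a, p a ∂μ = 1) (hintq : ∫⁻ a, q a ∂μ = 1)
    (ε : ℝ) (hε : 0 ≤ ε) (c1 : ℝ≥0∞) (hc10 : c1 ≠ 0) (hc11 : c1 ≤ 1)
    (hmQc : c1 ≤ ∫⁻ a, min (q a) (ENNReal.ofReal (Real.exp ε) * p a) ∂μ)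
    (hle : ∫⁻ a, min (q a) (ENNReal.ofReal (Real.exp ε) * p a) ∂μ
        ≤ ∫⁻ a, min (p a) (ENNReal.ofReal (Real.exp ε) * q a) ∂μ) :
    ∃ p₀ q₀ : α → ℝ≥0∞, Measurable p₀ ∧ Measurable q₀ ∧
      ∫⁻ a, p₀ a ∂μ = 1 ∧ ∫⁻ a, q₀ a ∂μ = 1 ∧
      (∀ a, c1 * p₀ a ≤ p a) ∧ (∀ a, c1 * q₀ a ≤ q a) ∧
      (∀ a, p₀ a ≤ ENNReal.ofReal (Real.exp ε) * q₀ a) ∧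
      (∀ a, q₀ a ≤ ENNReal.ofReal (Real.exp ε) * p₀ a) ∧
      (∀ a, p₀ a ≠ ∞) ∧ (∀ a, q₀ a ≠ ∞) := by
  set eε : ℝ≥0∞ := ENNReal.ofReal (Real.exp ε) with heε
  set εinv : ℝ≥0∞ := ENNReal.ofReal (Real.exp (-ε)) with hεinv
  have he1 : 1 ≤ eε := by
    rw [heε, ← ENNReal.ofReal_one]
    exact ENNReal.ofReal_le_ofReal (Real.one_le_exp hε)
  have hei1 : εinv ≤ 1 := by
    rw [hεinv, ← ENNReal.ofReal_one]
    exact ENNReal.ofReal_le_ofReal (Real.exp_le_one_iff.2 (neg_nonpos.2 hε))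
  have heεtop : eε ≠ ∞ := ENNReal.ofReal_ne_top
  have hεinvtop : εinv ≠ ∞ := ENNReal.ofReal_ne_top
  have hprod : εinv * eε = 1 := by
    rw [hεinv, heε, ← ENNReal.ofReal_mul (Real.exp_pos _).le, ← Real.exp_add]
    simp
  have hprod' : eε * εinv = 1 := by rw [mul_comm]; exact hprod
  set q' : α → ℝ≥0∞ := fun a => min (q a) (eε * p a) with hq'def
  set p' : α → ℝ≥0∞ := fun a => min (p a) (eε * q a) with hp'def
  have hq'meas : Measurable q' := hq.min (measurable_const.mul hp)
  have hp'meas : Measurable p' := hp.min (measurable_const.mul hq)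
  set mQ : ℝ≥0∞ := ∫⁻ a, q' a ∂μ with hmQ
  set mP : ℝ≥0∞ := ∫⁻ a, p' a ∂μ with hmP
  have hmQ1 : mQ ≤ 1 := by
    rw [hmQ, ← hintq]
    exact lintegral_mono fun a => min_le_left _ _
  have hmQ0 : mQ ≠ 0 := fun h => hc10 (le_antisymm (h ▸ hmQc) (zero_le))
  have hmQtop : mQ ≠ ∞ := (hmQ1.trans_lt ENNReal.one_lt_top).ne
  have hc1mQ : c1 ≤ mQ := hmQc
  -- q₀
  set q₀ : α → ℝ≥0∞ := fun a => q' a / mQ with hq₀def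
  have hq₀meas : Measurable q₀ := hq'meas.div measurable_const
  have hintq₀ : ∫⁻ a, q₀ a ∂μ = 1 := by
    simp_rw [hq₀def, div_eq_mul_inv]
    rw [lintegral_mul_const _ hq'meas, ← hmQ, ENNReal.mul_inv_cancel hmQ0 hmQtop]
  have hq₀fin : ∀ a, q₀ a ≠ ∞ := by
    intro a
    exact (ENNReal.div_lt_top (fun h => hqfin a (eq_top_mono (min_le_left _ _) h)) hmQ0).ne
  have hc1q₀ : ∀ a, c1 * q₀ a ≤ q a := by
    intro a
    calc c1 * q₀ a ≤ mQ * (q' a / mQ) := mul_le_mul_left hc1mQ _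
      _ = q' a := ENNReal.mul_div_cancel hmQ0 hmQtop
      _ ≤ q a := min_le_left _ _
  -- bounds
  set ℓ : α → ℝ≥0∞ := fun a => εinv * q₀ a with hℓdef
  set u : α → ℝ≥0∞ := fun a => min (p a / c1) (eε * q₀ a) with hudef
  have hℓmeas : Measurable ℓ := measurable_const.mul hq₀meas
  have humeas : Measurable u := (hp.div measurable_const).min (measurable_const.mul hq₀meas)
  have hc1top : c1 ≠ ∞ := (hc11.trans_lt ENNReal.one_lt_top).ne
  have hℓu : ∀ a, ℓ a ≤ u a := by
    intro a
    apply le_min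
    · have h1 : εinv * q' a ≤ p a := by
        calc εinv * q' a ≤ εinv * (eε * p a) := mul_le_mul_right (min_le_right _ _) _
          _ = p a := by rw [← mul_assoc, hprod, one_mul]
      calc εinv * q₀ a = (εinv * q' a) / mQ := by rw [hq₀def, mul_div_assoc]
        _ ≤ p a / mQ := ENNReal.div_le_div_right h1 _
        _ ≤ p a / c1 := ENNReal.div_le_div_left hc1mQ _
    · exact mul_le_mul_left (hei1.trans he1) _
  set Iu : ℝ≥0∞ := ∫⁻ a, u a ∂μ with hIu
  have hIu_le : Iu ≤ eε := by
    rw [hIu]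
    calc ∫⁻ a, u a ∂μ ≤ ∫⁻ a, eε * q₀ a ∂μ := lintegral_mono fun a => min_le_right _ _
      _ = eε * ∫⁻ a, q₀ a ∂μ := lintegral_const_mul _ hq₀meas
      _ = eε := by rw [hintq₀, mul_one]
  have hIutop : Iu ≠ ∞ := fun h => heεtop (eq_top_mono hIu_le h)
  have hIu_ge : 1 ≤ Iu := by
    have hubd : ∀ a, p' a / mQ ≤ u a := by
      intro a
      apply le_min
      · calc p' a / mQ ≤ p a / mQ := ENNReal.div_le_div_right (min_le_left _ _) _
          _ ≤ p a / c1 := ENNReal.div_le_div_left hc1mQ _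
      · have h1 : p' a ≤ eε * q' a := by
          rw [hq'def]
          calc p' a ≤ min (eε * q a) (eε * (eε * p a)) := by
                apply le_min
                · exact min_le_right _ _
                · calc p' a ≤ p a := min_le_left _ _
                    _ = 1 * p a := (one_mul _).symm
                    _ ≤ eε * (eε * p a) := by
                        rw [← mul_assoc]
                        exact mul_le_mul_left (one_le_mul he1 he1) _
            _ = eε * min (q a) (eε * p a) := (mul_min_of_nonneg _ _ (zero_le)).symm
        calc p' a / mQ ≤ (eε * q' a) / mQ := ENNReal.div_le_div_right h1 _
          _ = eε * (q' a / mQ) := by rw [mul_div_assoc]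
    calc (1 : ℝ≥0∞) ≤ mP / mQ := by
          rw [ENNReal.le_div_iff_mul_le (Or.inl hmQ0) (Or.inl hmQtop), one_mul]
          exact hle
      _ = ∫⁻ a, p' a / mQ ∂μ := by
          rw [hmP, div_eq_mul_inv, ← lintegral_mul_const _ hp'meas]
          simp_rw [div_eq_mul_inv]
      _ ≤ Iu := lintegral_mono hubd
  -- p₀
  set θ : ℝ≥0∞ := (1 - εinv) / (Iu - εinv) with hθdef
  have hθ1 : θ ≤ 1 := by
    rw [hθdef]
    exact ENNReal.div_le_of_le_mul (by rw [one_mul]; exact tsub_le_tsub_right hIu_ge _)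
  set p₀ : α → ℝ≥0∞ := fun a => ℓ a + θ * (u a - ℓ a) with hp₀def
  have hp₀meas : Measurable p₀ := hℓmeas.add (measurable_const.mul (humeas.sub hℓmeas))
  have hp₀u : ∀ a, p₀ a ≤ u a := by
    intro a
    calc ℓ a + θ * (u a - ℓ a) ≤ ℓ a + 1 * (u a - ℓ a) :=
          add_le_add_right (mul_le_mul_left hθ1 _) _
      _ = ℓ a + (u a - ℓ a) := by rw [one_mul]
      _ = u a := add_tsub_cancel_of_le (hℓu a)
  have hℓp₀ : ∀ a, ℓ a ≤ p₀ a := fun a => le_self_add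
  have hintℓ : ∫⁻ a, ℓ a ∂μ = εinv := by
    rw [hℓdef]
    rw [lintegral_const_mul _ hq₀meas, hintq₀, mul_one]
  have hintp₀ : ∫⁻ a, p₀ a ∂μ = 1 := by
    have hsub : ∫⁻ a, u a - ℓ a ∂μ = Iu - εinv := by
      rw [← hintℓ]
      exact lintegral_sub hℓmeas (by rw [hintℓ]; exact hεinvtop) (ae_of_all _ hℓu)
    rw [hp₀def]
    simp only
    rw [lintegral_add_left hℓmeas, lintegral_const_mul _ (f := fun a => u a - ℓ a) (humeas.sub hℓmeas), hsub, hintℓ, hθdef]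
    by_cases hez : εinv = 1
    · rw [hez]
      simp
    · have hεlt : εinv < 1 := lt_of_le_of_ne hei1 hez
      have hd0 : Iu - εinv ≠ 0 := by
        rw [← pos_iff_ne_zero, tsub_pos_iff_lt]
        exact lt_of_lt_of_le hεlt hIu_ge
      have hdtop : Iu - εinv ≠ ∞ := fun h => hIutop (eq_top_mono (tsub_le_self) h)
      rw [ENNReal.div_mul_cancel hd0 hdtop]
      exact add_tsub_cancel_of_le hei1
  have hp₀eεq₀ : ∀ a, p₀ a ≤ eε * q₀ a := fun a => (hp₀u a).trans (min_le_right _ _)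
  have hq₀eεp₀ : ∀ a, q₀ a ≤ eε * p₀ a := by
    intro a
    calc q₀ a = eε * εinv * q₀ a := by rw [hprod', one_mul]
      _ = eε * ℓ a := by rw [mul_assoc]
      _ ≤ eε * p₀ a := mul_le_mul_right (hℓp₀ a) _
  have hc1p₀ : ∀ a, c1 * p₀ a ≤ p a := by
    intro a
    calc c1 * p₀ a ≤ c1 * (p a / c1) := mul_le_mul_right ((hp₀u a).trans (min_le_left _ _)) _
      _ = p a := ENNReal.mul_div_cancel hc10 hc1top
  have hp₀fin : ∀ a, p₀ a ≠ ∞ := by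
    intro a
    have h2 : eε * q₀ a ≠ ∞ := ENNReal.mul_ne_top heεtop (hq₀fin a)
    exact fun h => h2 (eq_top_mono (hp₀eεq₀ a) h)
  exact ⟨p₀, q₀, hp₀meas, hq₀meas, hintp₀, hintq₀, hc1p₀, hc1q₀, hp₀eεq₀, hq₀eεp₀,
    hp₀fin, hq₀fin⟩



set_option maxHeartbeats 1000000 in
lemma core {α : Type*} [MeasurableSpace α] (μ : Measure α) [IsFiniteMeasure μ]
    (p q : α → ℝ≥0∞) (hp : Measurable p) (hq : Measurable q)
    (hpfin : ∀ a, p a ≠ ∞) (hqfin : ∀ a, q a ≠ ∞)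
    (hintp : ∫⁻ a, p a ∂μ = 1) (hintq : ∫⁻ a, q a ∂μ = 1)
    (ε δ : ℝ) (hε : 0 ≤ ε) (hδ : 0 ≤ δ)
    (hd1 : ∀ s, MeasurableSet s → ∫⁻ a in s, p a ∂μ
        ≤ ENNReal.ofReal (Real.exp ε) * ∫⁻ a in s, q a ∂μ + ENNReal.ofReal δ)
    (hd2 : ∀ s, MeasurableSet s → ∫⁻ a in s, q a ∂μ
        ≤ ENNReal.ofReal (Real.exp ε) * ∫⁻ a in s, p a ∂μ + ENNReal.ofReal δ)
    (T : ℕ) (hT : 1 ≤ T) (δ' : ℝ) (hδ'0 : 0 < δ') (hδ'1 : δ' < 1)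
    (S : Set (Fin T → α)) (hS : MeasurableSet S) :
    (Measure.pi fun _ : Fin T => μ.withDensity p) S
      ≤ ENNReal.ofReal (Real.exp (T * ε ^ 2 + ε * Real.sqrt (2 * T * Real.log (1 / δ'))))
          * (Measure.pi fun _ : Fin T => μ.withDensity q) S + ENNReal.ofReal (T * δ + δ') := by
  have hμT : ∀ f : α → ℝ≥0∞, Measurable f → ∫⁻ a, f a ∂μ = 1 →
      Measure.pi (fun _ : Fin T => μ.withDensity f)
        = (Measure.pi fun _ : Fin T => μ).withDensity (fun x => ∏ i, f (x i)) := by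
    intro f hf hintf
    exact withDensity_pi μ f hf (by rw [hintf]; exact ENNReal.one_ne_top) T
  set μT := Measure.pi (fun _ : Fin T => μ) with hμTdef
  have hprodint : ∀ f : α → ℝ≥0∞, Measurable f →
      ∫⁻ x, ∏ i, f (x i) ∂μT = (∫⁻ a, f a ∂μ) ^ T := by
    intro f hf
    rw [lintegral_pi_prod T (fun _ => μ) (fun _ => inferInstance) (fun _ => f) (fun _ => hf)]
    rw [Finset.prod_const, Finset.card_univ, Fintype.card_fin]
  -- convert goal to densities
  rw [hμT p hp hintp, hμT q hq hintq]
  set Fp : (Fin T → α) → ℝ≥0∞ := fun x => ∏ i, p (x i) with hFpdef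
  set Fq : (Fin T → α) → ℝ≥0∞ := fun x => ∏ i, q (x i) with hFqdef
  have hFpm : Measurable Fp := Finset.measurable_prod _ fun i _ => hp.comp (measurable_pi_apply i)
  have hFqm : Measurable Fq := Finset.measurable_prod _ fun i _ => hq.comp (measurable_pi_apply i)
  rw [withDensity_apply _ hS, withDensity_apply _ hS]
  have hintFp : ∫⁻ x, Fp x ∂μT = 1 := by rw [hprodint p hp, hintp, one_pow]
  -- trivial case δ ≥ 1
  rcases le_or_gt 1 δ with hδ1 | hδ1
  · calc ∫⁻ x in S, Fp x ∂μT ≤ ∫⁻ x, Fp x ∂μT := setLIntegral_le_lintegral _ _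
      _ = 1 := hintFp
      _ ≤ ENNReal.ofReal (T * δ + δ') := by
          rw [← ENNReal.ofReal_one]
          apply ENNReal.ofReal_le_ofReal
          have hT1 : (1:ℝ) ≤ (T:ℝ) := by exact_mod_cast hT
          nlinarith
      _ ≤ _ := le_add_self
  -- main case
  set eε : ℝ≥0∞ := ENNReal.ofReal (Real.exp ε) with heε
  set c1 : ℝ≥0∞ := ENNReal.ofReal (1 - δ) with hc1
  have hc10 : c1 ≠ 0 := by
    rw [hc1, ← pos_iff_ne_zero, ENNReal.ofReal_pos]
    linarith
  have hc11 : c1 ≤ 1 := by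
    rw [hc1, ← ENNReal.ofReal_one]
    exact ENNReal.ofReal_le_ofReal (by linarith)
  have hc1eq : c1 = 1 - ENNReal.ofReal δ := by
    rw [hc1, ENNReal.ofReal_sub _ hδ, ENNReal.ofReal_one]
  -- both truncated masses are at least c1
  have hmass : ∀ (f g : α → ℝ≥0∞), Measurable f → Measurable g → (∫⁻ a, f a ∂μ = 1) →
      (∀ s, MeasurableSet s → ∫⁻ a in s, f a ∂μ ≤ eε * ∫⁻ a in s, g a ∂μ + ENNReal.ofReal δ) →
      c1 ≤ ∫⁻ a, min (f a) (eε * g a) ∂μ := by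
    intro f g hf hg hintf hD
    set B := {a | eε * g a < f a} with hB
    have hBm : MeasurableSet B := measurableSet_lt (measurable_const.mul hg) hf
    have hsplit : ∫⁻ a, min (f a) (eε * g a) ∂μ
        = ∫⁻ a in B, eε * g a ∂μ + ∫⁻ a in Bᶜ, f a ∂μ := by
      rw [← lintegral_add_compl (fun a => min (f a) (eε * g a)) hBm]
      congr 1
      · apply setLIntegral_congr_fun hBm
        exact fun a ha => min_eq_right (le_of_lt ha)
      · apply setLIntegral_congr_fun hBm.compl
        exact fun a ha => min_eq_left (not_lt.1 ha)
    have hone : (1:ℝ≥0∞) = ∫⁻ a in B, f a ∂μ + ∫⁻ a in Bᶜ, f a ∂μ := by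
      rw [lintegral_add_compl _ hBm, hintf]
    have h2 : (1:ℝ≥0∞) ≤ (∫⁻ a, min (f a) (eε * g a) ∂μ) + ENNReal.ofReal δ := by
      rw [hone, hsplit]
      calc ∫⁻ a in B, f a ∂μ + ∫⁻ a in Bᶜ, f a ∂μ
          ≤ (eε * ∫⁻ a in B, g a ∂μ + ENNReal.ofReal δ) + ∫⁻ a in Bᶜ, f a ∂μ :=
            add_le_add_left (hD B hBm) _
        _ = (∫⁻ a in B, eε * g a ∂μ + ∫⁻ a in Bᶜ, f a ∂μ) + ENNReal.ofReal δ := by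
            rw [lintegral_const_mul _ hg]
            ring
    rw [hc1eq]
    exact tsub_le_iff_right.2 h2
  have hmQc := hmass q p hq hp hintq hd2
  have hmPc := hmass p q hp hq hintp hd1
  -- decomposition
  obtain ⟨p₀, q₀, hp₀m, hq₀m, hintp₀, hintq₀, hc1p₀, hc1q₀, hp₀eεq₀, hq₀eεp₀, hp₀fin, hq₀fin⟩ :
      ∃ p₀ q₀ : α → ℝ≥0∞, Measurable p₀ ∧ Measurable q₀ ∧
        ∫⁻ a, p₀ a ∂μ = 1 ∧ ∫⁻ a, q₀ a ∂μ = 1 ∧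
        (∀ a, c1 * p₀ a ≤ p a) ∧ (∀ a, c1 * q₀ a ≤ q a) ∧
        (∀ a, p₀ a ≤ eε * q₀ a) ∧ (∀ a, q₀ a ≤ eε * p₀ a) ∧
        (∀ a, p₀ a ≠ ∞) ∧ (∀ a, q₀ a ≠ ∞) := by
    rcases le_total (∫⁻ a, min (q a) (eε * p a) ∂μ) (∫⁻ a, min (p a) (eε * q a) ∂μ)
      with hcase | hcase
    · obtain ⟨p₀, q₀, h1, h2, h3, h4, h5, h6, h7, h8, h9, h10⟩ :=
        decomp μ p q hp hq hqfin hintp hintq ε hε c1 hc10 hc11 hmQc hcase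
      exact ⟨p₀, q₀, h1, h2, h3, h4, h5, h6, h7, h8, h9, h10⟩
    · obtain ⟨q₀, p₀, h1, h2, h3, h4, h5, h6, h7, h8, h9, h10⟩ :=
        decomp μ q p hq hp hpfin hintq hintp ε hε c1 hc10 hc11 hmPc hcase
      exact ⟨p₀, q₀, h2, h1, h4, h3, h6, h5, h8, h7, h10, h9⟩
  set Fp₀ : (Fin T → α) → ℝ≥0∞ := fun x => ∏ i, p₀ (x i) with hFp₀def
  set Fq₀ : (Fin T → α) → ℝ≥0∞ := fun x => ∏ i, q₀ (x i) with hFq₀def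
  have hFp₀m : Measurable Fp₀ :=
    Finset.measurable_prod _ fun i _ => hp₀m.comp (measurable_pi_apply i)
  have hFq₀m : Measurable Fq₀ :=
    Finset.measurable_prod _ fun i _ => hq₀m.comp (measurable_pi_apply i)
  have hintFp₀ : ∫⁻ x, Fp₀ x ∂μT = 1 := by rw [hprodint p₀ hp₀m, hintp₀, one_pow]
  have hintFq₀ : ∫⁻ x, Fq₀ x ∂μT = 1 := by rw [hprodint q₀ hq₀m, hintq₀, one_pow]
  set c1T : ℝ≥0∞ := c1 ^ T with hc1T
  have hc1T1 : c1T ≤ 1 := pow_le_one' hc11 T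
  have hc1Ttop : c1T ≠ ∞ := (hc1T1.trans_lt ENNReal.one_lt_top).ne
  -- mixture bounds, pointwise
  have hptw : ∀ x, c1T * Fp₀ x ≤ Fp x := by
    intro x
    calc c1T * Fp₀ x = ∏ i, (c1 * p₀ (x i)) := by
          rw [Finset.prod_mul_distrib, Finset.prod_const, Finset.card_univ, Fintype.card_fin,
            hc1T]
      _ ≤ ∏ i, p (x i) := Finset.prod_le_prod' fun i _ => hc1p₀ (x i)
  have hqtw : ∀ x, c1T * Fq₀ x ≤ Fq x := by
    intro x
    calc c1T * Fq₀ x = ∏ i, (c1 * q₀ (x i)) := by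
          rw [Finset.prod_mul_distrib, Finset.prod_const, Finset.card_univ, Fintype.card_fin,
            hc1T]
      _ ≤ ∏ i, q (x i) := Finset.prod_le_prod' fun i _ => hc1q₀ (x i)
  -- step 2 : mixture
  have hstep2 : ∫⁻ x in S, Fp x ∂μT ≤ c1T * ∫⁻ x in S, Fp₀ x ∂μT + (1 - c1T) := by
    have hrw : ∀ x, Fp x = c1T * Fp₀ x + (Fp x - c1T * Fp₀ x) :=
      fun x => (add_tsub_cancel_of_le (hptw x)).symm
    calc ∫⁻ x in S, Fp x ∂μT
        = ∫⁻ x in S, (c1T * Fp₀ x + (Fp x - c1T * Fp₀ x)) ∂μT := lintegral_congr hrw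
      _ = ∫⁻ x in S, c1T * Fp₀ x ∂μT + ∫⁻ x in S, (Fp x - c1T * Fp₀ x) ∂μT :=
          lintegral_add_left (measurable_const.mul hFp₀m) _
      _ ≤ c1T * ∫⁻ x in S, Fp₀ x ∂μT + (1 - c1T) := by
          apply add_le_add
          · rw [lintegral_const_mul _ hFp₀m]
          · calc ∫⁻ x in S, (Fp x - c1T * Fp₀ x) ∂μT
                ≤ ∫⁻ x, (Fp x - c1T * Fp₀ x) ∂μT := setLIntegral_le_lintegral _ _
              _ = ∫⁻ x, Fp x ∂μT - ∫⁻ x, c1T * Fp₀ x ∂μT := by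
                  apply lintegral_sub (measurable_const.mul hFp₀m)
                  · change ∫⁻ x, c1T * Fp₀ x ∂μT ≠ ∞
                    rw [lintegral_const_mul _ hFp₀m, hintFp₀, mul_one]
                    exact hc1Ttop
                  · exact ae_of_all _ hptw
              _ = 1 - c1T := by
                  rw [hintFp, lintegral_const_mul _ hFp₀m, hintFp₀, mul_one]
  -- event
  set s : ℝ := Real.sqrt (2 * T * Real.log (1 / δ')) with hsdef
  set aexp : ℝ := T * ε ^ 2 + ε * s with haexp
  set A : ℝ≥0∞ := ENNReal.ofReal (Real.exp aexp) with hA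
  set Ec : Set (Fin T → α) := {x | A * Fq₀ x < Fp₀ x} with hEc
  have hEcm : MeasurableSet Ec := measurableSet_lt (measurable_const.mul hFq₀m) hFp₀m
  have hL0 : 0 < Real.log (1 / δ') :=
    Real.log_pos (by rw [one_div]; exact one_lt_inv_iff₀.2 ⟨hδ'0, hδ'1⟩)
  have hT0 : (0:ℝ) < T := by
    have : (1:ℝ) ≤ (T:ℝ) := by exact_mod_cast hT
    linarith
  have hs0 : 0 ≤ s := Real.sqrt_nonneg _
  -- tail bound
  have htail : ∫⁻ x in Ec, Fp₀ x ∂μT ≤ ENNReal.ofReal δ' := by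
    rcases eq_or_lt_of_le hε with hε0 | hε0
    · -- ε = 0 : the event is empty
      have heε1 : eε = 1 := by rw [heε, ← hε0, Real.exp_zero, ENNReal.ofReal_one]
      have hA1 : 1 ≤ A := by
        rw [hA, ← ENNReal.ofReal_one]
        apply ENNReal.ofReal_le_ofReal
        apply Real.one_le_exp
        rw [haexp]
        have h1 : 0 ≤ ε * s := mul_nonneg hε hs0
        have h2 : (0:ℝ) ≤ T * ε ^ 2 := by positivity
        linarith
      have hEce : Ec = ∅ := by
        rw [hEc, Set.eq_empty_iff_forall_notMem]
        intro x hx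
        simp only [Set.mem_setOf_eq] at hx
        have h1 : Fp₀ x ≤ Fq₀ x := Finset.prod_le_prod' fun i _ => by
          have h := hp₀eεq₀ (x i)
          rwa [heε1, one_mul] at h
        have h2 : Fq₀ x ≤ A * Fq₀ x := by
          conv_lhs => rw [← one_mul (Fq₀ x)]
          exact mul_le_mul_left hA1 _
        exact absurd (hx.trans_le (h1.trans h2)) (lt_irrefl _)
      rw [hEce]
      simp
    · -- ε > 0
      set lam : ℝ := s / (T * ε) with hlam
      have hs0' : 0 < s := Real.sqrt_pos.2 (by positivity)
      have hlam0 : 0 < lam := by positivity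
      set g : α → ℝ≥0∞ := fun a => p₀ a * (p₀ a / q₀ a) ^ lam with hgdef
      have hgm : Measurable g :=
        hp₀m.mul ((ENNReal.continuous_rpow_const.measurable).comp (hp₀m.div hq₀m))
      set Cv : ℝ := (Real.exp ε * Real.exp (lam * ε) - Real.exp (-ε) * Real.exp (-(lam * ε)))
          / (Real.exp ε - Real.exp (-ε)) with hCv
      set Dv : ℝ := (Real.exp (lam * ε) - Real.exp (-(lam * ε)))
          / (Real.exp ε - Real.exp (-ε)) with hDv
      have hden : 0 < Real.exp ε - Real.exp (-ε) := by
        have : Real.exp (-ε) < Real.exp ε := Real.exp_lt_exp.2 (by linarith)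
        linarith
      have hDv0 : 0 ≤ Dv := by
        rw [hDv]
        apply div_nonneg _ hden.le
        have h : -(lam * ε) ≤ lam * ε := by nlinarith
        have := Real.exp_le_exp.2 h
        linarith
      have hCv0 : 0 ≤ Cv := by
        rw [hCv]
        apply div_nonneg _ hden.le
        have h1 : Real.exp (-ε) ≤ Real.exp ε := Real.exp_le_exp.2 (by linarith)
        have h2 : Real.exp (-(lam * ε)) ≤ Real.exp (lam * ε) :=
          Real.exp_le_exp.2 (by nlinarith)
        nlinarith [Real.exp_pos (-ε), Real.exp_pos (-(lam * ε))]
      -- pointwise chord bound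
      have hpt : ∀ a, g a + ENNReal.ofReal Dv * q₀ a ≤ ENNReal.ofReal Cv * p₀ a := by
        intro a
        rcases eq_or_ne (p₀ a) 0 with hz | hz
        · have hqz : q₀ a = 0 := by
            have h := hq₀eεp₀ a
            rw [hz, mul_zero] at h
            exact le_antisymm h (zero_le)
          rw [hgdef]
          simp [hz, hqz]
        · have hqz : q₀ a ≠ 0 := by
            intro h
            apply hz
            have h2 := hp₀eεq₀ a
            rw [h, mul_zero] at h2
            exact le_antisymm h2 (zero_le)
          set pr : ℝ := (p₀ a).toReal with hpr
          set qr : ℝ := (q₀ a).toReal with hqr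
          have hpr0 : 0 < pr := ENNReal.toReal_pos hz (hp₀fin a)
          have hqr0 : 0 < qr := ENNReal.toReal_pos hqz (hq₀fin a)
          have hple : pr ≤ Real.exp ε * qr := by
            have h := hp₀eεq₀ a
            have h2 : (p₀ a).toReal ≤ (eε * q₀ a).toReal :=
              ENNReal.toReal_mono (ENNReal.mul_ne_top ENNReal.ofReal_ne_top (hq₀fin a)) h
            rwa [ENNReal.toReal_mul, heε, ENNReal.toReal_ofReal (Real.exp_nonneg _)] at h2
          have hqle : qr ≤ Real.exp ε * pr := by
            have h := hq₀eεp₀ a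
            have h2 : (q₀ a).toReal ≤ (eε * p₀ a).toReal :=
              ENNReal.toReal_mono (ENNReal.mul_ne_top ENNReal.ofReal_ne_top (hp₀fin a)) h
            rwa [ENNReal.toReal_mul, heε, ENNReal.toReal_ofReal (Real.exp_nonneg _)] at h2
          set y : ℝ := qr / pr with hy
          have hy1 : Real.exp (-ε) ≤ y := by
            rw [hy, le_div_iff₀ hpr0, Real.exp_neg, inv_mul_eq_div,
              div_le_iff₀ (Real.exp_pos ε)]
            linarith
          have hy2 : y ≤ Real.exp ε := by
            rw [hy, div_le_iff₀ hpr0]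
            linarith
          have hchord := chord_bound hε0 hlam0.le hy1 hy2
          have hreal : pr * y ^ (-lam) + Dv * qr ≤ Cv * pr := by
            have h1 : pr * (y ^ (-lam) + Dv * y) ≤ pr * Cv :=
              mul_le_mul_of_nonneg_left (by rw [hCv, hDv]; exact hchord) hpr0.le
            have h2 : pr * (y ^ (-lam) + Dv * y) = pr * y ^ (-lam) + Dv * qr := by
              rw [hy]
              field_simp
            rw [h2] at h1
            linarith
          have hgval : g a = ENNReal.ofReal (pr * y ^ (-lam)) := by
            rw [hgdef]
            simp only
            have hdiv : p₀ a / q₀ a = ENNReal.ofReal (pr / qr) := by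
              rw [ENNReal.ofReal_div_of_pos hqr0, hpr, hqr,
                ENNReal.ofReal_toReal (hp₀fin a), ENNReal.ofReal_toReal (hq₀fin a)]
            have hyinv : y ^ (-lam) = (pr / qr) ^ lam := by
              rw [hy, Real.rpow_neg (div_nonneg hqr0.le hpr0.le), ← Real.inv_rpow
                (div_nonneg hqr0.le hpr0.le), inv_div]
            rw [hdiv, ENNReal.ofReal_rpow_of_pos (by positivity), ← hyinv,
              ← ENNReal.ofReal_toReal (hp₀fin a), ← hpr, ← ENNReal.ofReal_mul hpr0.le]
          have hqval : q₀ a = ENNReal.ofReal qr := (ENNReal.ofReal_toReal (hq₀fin a)).symm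
          have hpval : p₀ a = ENNReal.ofReal pr := (ENNReal.ofReal_toReal (hp₀fin a)).symm
          rw [hgval, hqval, hpval, ← ENNReal.ofReal_mul hDv0,
            ← ENNReal.ofReal_add (by positivity) (by positivity),
            ← ENNReal.ofReal_mul hCv0]
          exact ENNReal.ofReal_le_ofReal hreal
      -- the moment bound
      have hmgf : ∫⁻ a, g a ∂μ ≤ ENNReal.ofReal (Real.exp ((lam ^ 2 + lam) * ε ^ 2 / 2)) := by
        have hint2 : (∫⁻ a, g a ∂μ) + ENNReal.ofReal Dv ≤ ENNReal.ofReal Cv := by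
          calc (∫⁻ a, g a ∂μ) + ENNReal.ofReal Dv
              = ∫⁻ a, (g a + ENNReal.ofReal Dv * q₀ a) ∂μ := by
                rw [lintegral_add_left hgm, lintegral_const_mul _ hq₀m, hintq₀, mul_one]
            _ ≤ ∫⁻ a, ENNReal.ofReal Cv * p₀ a ∂μ := lintegral_mono hpt
            _ = ENNReal.ofReal Cv := by rw [lintegral_const_mul _ hp₀m, hintp₀, mul_one]
        calc ∫⁻ a, g a ∂μ ≤ ENNReal.ofReal Cv - ENNReal.ofReal Dv :=
              ENNReal.le_sub_of_add_le_right ENNReal.ofReal_ne_top hint2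
          _ = ENNReal.ofReal (Cv - Dv) := (ENNReal.ofReal_sub _ hDv0).symm
          _ ≤ ENNReal.ofReal (Real.exp ((lam ^ 2 + lam) * ε ^ 2 / 2)) := by
              apply ENNReal.ofReal_le_ofReal
              rw [hCv, hDv]
              exact G_bound hε0 hlam0.le
      -- Chernoff pointwise bound
      have hch : ∀ x, Ec.indicator Fp₀ x
          ≤ ENNReal.ofReal (Real.exp (-(lam * aexp))) * ∏ i, g (x i) := by
        intro x
        by_cases hx : x ∈ Ec
        · rw [Set.indicator_of_mem hx]
          rw [hEc] at hx
          simp only [Set.mem_setOf_eq] at hx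
          have hq0 : ∀ i, q₀ (x i) ≠ 0 := by
            intro i h0
            have hz : p₀ (x i) = 0 := by
              have h := hp₀eεq₀ (x i)
              rw [h0, mul_zero] at h
              exact le_antisymm h (zero_le)
            have hFp0 : Fp₀ x = 0 := Finset.prod_eq_zero (Finset.mem_univ i) hz
            rw [hFp0] at hx
            exact absurd hx (not_lt.2 (zero_le))
          have hp0 : ∀ i, p₀ (x i) ≠ 0 := by
            intro i h0
            apply hq0 i
            have h := hq₀eεp₀ (x i)
            rw [h0, mul_zero] at h
            exact le_antisymm h (zero_le)
          have hFq₀top : Fq₀ x ≠ ∞ :=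
            (ENNReal.prod_lt_top fun i _ => (hq₀fin (x i)).lt_top).ne
          have hFq₀0 : Fq₀ x ≠ 0 := by
            rw [hFq₀def]
            simp only
            rw [Finset.prod_ne_zero_iff]
            exact fun i _ => hq0 i
          set Rr : ℝ≥0∞ := ∏ i, (p₀ (x i) / q₀ (x i)) with hRr
          have hRF : Fp₀ x = Rr * Fq₀ x := by
            rw [hRr, hFq₀def, hFp₀def]
            simp only
            rw [← Finset.prod_mul_distrib]
            apply Finset.prod_congr rfl
            intro i _
            rw [ENNReal.div_mul_cancel (hq0 i) (hq₀fin (x i))]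
          have hAR : A < Rr := by
            rw [hRF] at hx
            rw [mul_comm A (Fq₀ x), mul_comm Rr (Fq₀ x)] at hx
            exact (ENNReal.mul_lt_mul_iff_right hFq₀0 hFq₀top).1 hx
          have hRlam : ENNReal.ofReal (Real.exp (lam * aexp)) ≤ Rr ^ lam := by
            calc ENNReal.ofReal (Real.exp (lam * aexp)) = A ^ lam := by
                  rw [hA, ENNReal.ofReal_rpow_of_pos (Real.exp_pos _)]
                  congr 1
                  rw [← Real.exp_mul, mul_comm]
              _ ≤ Rr ^ lam := ENNReal.rpow_le_rpow hAR.le hlam0.le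
          have h1 : (1:ℝ≥0∞) ≤ ENNReal.ofReal (Real.exp (-(lam * aexp))) * Rr ^ lam := by
            calc (1:ℝ≥0∞) = ENNReal.ofReal (Real.exp (-(lam * aexp)))
                  * ENNReal.ofReal (Real.exp (lam * aexp)) := by
                  rw [← ENNReal.ofReal_mul (Real.exp_nonneg _), ← Real.exp_add,
                    neg_add_cancel, Real.exp_zero, ENNReal.ofReal_one]
              _ ≤ _ := mul_le_mul_right hRlam _
          have hRprod : Rr ^ lam = ∏ i, (p₀ (x i) / q₀ (x i)) ^ lam := by
            rw [hRr]
            exact (ENNReal.prod_rpow_of_ne_top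
              (fun i _ => (ENNReal.div_lt_top (hp₀fin (x i)) (hq0 i)).ne) lam).symm
          calc Fp₀ x = 1 * Fp₀ x := (one_mul _).symm
            _ ≤ (ENNReal.ofReal (Real.exp (-(lam * aexp))) * Rr ^ lam) * Fp₀ x :=
                mul_le_mul_left h1 _
            _ = ENNReal.ofReal (Real.exp (-(lam * aexp))) * ∏ i, g (x i) := by
                rw [hRprod, mul_assoc]
                congr 1
                rw [hFp₀def, hgdef]
                simp only
                rw [← Finset.prod_mul_distrib]
                apply Finset.prod_congr rfl
                intro i _
                rw [mul_comm]
        · rw [Set.indicator_of_notMem hx]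
          exact zero_le
      have hGm : Measurable fun x : Fin T → α => ∏ i, g (x i) :=
        Finset.measurable_prod _ fun i _ => hgm.comp (measurable_pi_apply i)
      calc ∫⁻ x in Ec, Fp₀ x ∂μT = ∫⁻ x, Ec.indicator Fp₀ x ∂μT :=
            (lintegral_indicator hEcm _).symm
        _ ≤ ∫⁻ x, ENNReal.ofReal (Real.exp (-(lam * aexp))) * ∏ i, g (x i) ∂μT :=
            lintegral_mono hch
        _ = ENNReal.ofReal (Real.exp (-(lam * aexp))) * (∫⁻ a, g a ∂μ) ^ T := by
            rw [lintegral_const_mul _ hGm, hprodint g hgm]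
        _ ≤ ENNReal.ofReal (Real.exp (-(lam * aexp)))
              * (ENNReal.ofReal (Real.exp ((lam ^ 2 + lam) * ε ^ 2 / 2))) ^ T :=
            mul_le_mul_right (pow_le_pow_left' hmgf T) _
        _ = ENNReal.ofReal (Real.exp (-(lam * aexp) + T * ((lam ^ 2 + lam) * ε ^ 2 / 2))) := by
            rw [← ENNReal.ofReal_pow (Real.exp_nonneg _), ← Real.exp_nat_mul,
              ← ENNReal.ofReal_mul (Real.exp_nonneg _), ← Real.exp_add]
        _ ≤ ENNReal.ofReal δ' := by
            apply ENNReal.ofReal_le_ofReal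
            rw [← Real.exp_log hδ'0]
            apply Real.exp_le_exp.2
            have hs2 : s ^ 2 = 2 * T * Real.log (1 / δ') := by
              rw [hsdef]
              exact Real.sq_sqrt (by positivity)
            have hlogd : Real.log δ' = -Real.log (1 / δ') := by
              rw [one_div, Real.log_inv]
              ring
            have hεne : ε ≠ 0 := ne_of_gt hε0
            have hTne : (T:ℝ) ≠ 0 := ne_of_gt hT0
            have key : -(lam * aexp) + T * ((lam ^ 2 + lam) * ε ^ 2 / 2)
                = -(s ^ 2 / (2 * T)) - ε * s / 2 := by
              rw [hlam, haexp]
              field_simp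
              ring
            rw [key, hlogd, hs2]
            have h2 : 2 * (T:ℝ) * Real.log (1 / δ') / (2 * T) = Real.log (1 / δ') := by
              field_simp
            rw [h2]
            nlinarith [mul_nonneg hε hs0]
  -- step 3
  have hstep3 : ∫⁻ x in S, Fp₀ x ∂μT ≤ A * ∫⁻ x in S, Fq₀ x ∂μT + ENNReal.ofReal δ' := by
    rw [← lintegral_inter_add_diff Fp₀ S hEcm]
    have h1 : ∫⁻ x in S ∩ Ec, Fp₀ x ∂μT ≤ ENNReal.ofReal δ' := by
      refine le_trans ?_ htail
      exact lintegral_mono' (Measure.restrict_mono Set.inter_subset_right le_rfl) le_rfl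
    have h2 : ∫⁻ x in S \ Ec, Fp₀ x ∂μT ≤ A * ∫⁻ x in S, Fq₀ x ∂μT := by
      calc ∫⁻ x in S \ Ec, Fp₀ x ∂μT ≤ ∫⁻ x in S \ Ec, A * Fq₀ x ∂μT := by
            apply setLIntegral_mono (measurable_const.mul hFq₀m)
            intro x hxmem
            have hnot : x ∉ Ec := hxmem.2
            rw [hEc] at hnot
            simp only [Set.mem_setOf_eq, not_lt] at hnot
            exact hnot
        _ ≤ ∫⁻ x in S, A * Fq₀ x ∂μT :=
            lintegral_mono' (Measure.restrict_mono Set.diff_subset le_rfl) le_rfl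
        _ = A * ∫⁻ x in S, Fq₀ x ∂μT := lintegral_const_mul _ hFq₀m
    calc ∫⁻ x in S ∩ Ec, Fp₀ x ∂μT + ∫⁻ x in S \ Ec, Fp₀ x ∂μT
        ≤ ENNReal.ofReal δ' + (A * ∫⁻ x in S, Fq₀ x ∂μT) := add_le_add h1 h2
      _ = A * ∫⁻ x in S, Fq₀ x ∂μT + ENNReal.ofReal δ' := add_comm _ _
  -- final assembly
  have hbern : 1 - c1T ≤ ENNReal.ofReal (T * δ) := by
    have hc1Teq : c1T = ENNReal.ofReal ((1 - δ) ^ T) := by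
      rw [hc1T, hc1, ENNReal.ofReal_pow (by linarith)]
    rw [hc1Teq, ← ENNReal.ofReal_one, ← ENNReal.ofReal_sub _ (pow_nonneg (by linarith) T)]
    apply ENNReal.ofReal_le_ofReal
    have hb : 1 + (T:ℝ) * (-δ) ≤ (1 + -δ) ^ T := one_add_mul_le_pow (by linarith) T
    have he : (1:ℝ) + -δ = 1 - δ := by ring
    rw [he] at hb
    linarith
  calc ∫⁻ x in S, Fp x ∂μT
      ≤ c1T * ∫⁻ x in S, Fp₀ x ∂μT + (1 - c1T) := hstep2
    _ ≤ c1T * (A * ∫⁻ x in S, Fq₀ x ∂μT + ENNReal.ofReal δ') + (1 - c1T) :=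
        add_le_add_left (mul_le_mul_right hstep3 _) _
    _ = A * (c1T * ∫⁻ x in S, Fq₀ x ∂μT) + (c1T * ENNReal.ofReal δ' + (1 - c1T)) := by
        ring
    _ ≤ A * ∫⁻ x in S, Fq x ∂μT + ENNReal.ofReal (T * δ + δ') := by
        apply add_le_add
        · apply mul_le_mul_right
          calc c1T * ∫⁻ x in S, Fq₀ x ∂μT = ∫⁻ x in S, c1T * Fq₀ x ∂μT :=
                (lintegral_const_mul _ hFq₀m).symm
            _ ≤ ∫⁻ x in S, Fq x ∂μT := setLIntegral_mono hFqm fun x _ => hqtw x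
        · calc c1T * ENNReal.ofReal δ' + (1 - c1T)
              ≤ 1 * ENNReal.ofReal δ' + ENNReal.ofReal (T * δ) :=
                add_le_add (mul_le_mul_left hc1T1 _) hbern
            _ = ENNReal.ofReal (T * δ + δ') := by
                rw [one_mul, ← ENNReal.ofReal_add hδ'0.le (by positivity), add_comm δ' (T * δ)]

end Stmt12Aux

open MeasureTheory Stmt12Aux
open scoped ENNReal


/-- advanced composition, privacy part of Theorem 4.1.
If `M` is `(ε,δ)`-DP, then for every `δ' ∈ (0,1)` the `T`-fold product mechanism
`d ↦ (M d)^{⊗T}` is `(Tε² + ε√(2T ln(1/δ')), Tδ + δ')`-DP. -/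
theorem stmt_12 {D R : Type*} [DecidableEq D] [MeasurableSpace R] {n : ℕ}
    (M : (Fin n → D) → Measure R) [∀ d, IsProbabilityMeasure (M d)]
    (ε δ : ℝ) (hε : 0 ≤ ε) (hδ : 0 ≤ δ)
    (hDP : ∀ d d' : Fin n → D, hammingDist d d' = 1 →
      ∀ S : Set R, M d S ≤ ENNReal.ofReal (Real.exp ε) * M d' S + ENNReal.ofReal δ)
    (T : ℕ) (hT : 1 ≤ T) :
    ∀ δ' : ℝ, δ' ∈ Set.Ioo (0 : ℝ) 1 →
      ∀ d d' : Fin n → D, hammingDist d d' = 1 →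
        ∀ S : Set (Fin T → R),
          Measure.pi (fun _ : Fin T => M d) S ≤
            ENNReal.ofReal (Real.exp (T * ε ^ 2 + ε * Real.sqrt (2 * T * Real.log (1 / δ')))) *
              Measure.pi (fun _ : Fin T => M d') S
              + ENNReal.ofReal (T * δ + δ') := by
  intro δ' hδ' d d' hdd S
  set μ : Measure R := M d + M d' with hμdef
  have hacP : M d ≪ μ := Measure.absolutelyContinuous_of_le (Measure.le_add_right le_rfl)
  have hacQ : M d' ≪ μ := Measure.absolutelyContinuous_of_le (Measure.le_add_left le_rfl)
  set praw := (M d).rnDeriv μ with hpraw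
  set qraw := (M d').rnDeriv μ with hqraw
  have hprawm : Measurable praw := Measure.measurable_rnDeriv _ _
  have hqrawm : Measurable qraw := Measure.measurable_rnDeriv _ _
  set p : R → ℝ≥0∞ := fun a => if praw a < ∞ then praw a else 0 with hpdef
  set q : R → ℝ≥0∞ := fun a => if qraw a < ∞ then qraw a else 0 with hqdef
  have hpm : Measurable p := Measurable.ite (measurableSet_lt hprawm measurable_const)
    hprawm measurable_const
  have hqm : Measurable q := Measurable.ite (measurableSet_lt hqrawm measurable_const)
    hqrawm measurable_const
  have hpae : p =ᵐ[μ] praw := by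
    filter_upwards [Measure.rnDeriv_lt_top (M d) μ] with a ha
    rw [hpdef]
    exact if_pos ha
  have hqae : q =ᵐ[μ] qraw := by
    filter_upwards [Measure.rnDeriv_lt_top (M d') μ] with a ha
    rw [hqdef]
    exact if_pos ha
  have hP : μ.withDensity p = M d := by
    rw [withDensity_congr_ae hpae]
    exact Measure.withDensity_rnDeriv_eq _ _ hacP
  have hQ : μ.withDensity q = M d' := by
    rw [withDensity_congr_ae hqae]
    exact Measure.withDensity_rnDeriv_eq _ _ hacQ
  have hpfin : ∀ a, p a ≠ ∞ := by
    intro a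
    rw [hpdef]
    by_cases h : praw a < ∞
    · simp only [if_pos h]
      exact h.ne
    · simp [if_neg h]
  have hqfin : ∀ a, q a ≠ ∞ := by
    intro a
    rw [hqdef]
    by_cases h : qraw a < ∞
    · simp only [if_pos h]
      exact h.ne
    · simp [if_neg h]
  have hintp : ∫⁻ a, p a ∂μ = 1 := by
    have h1 : (μ.withDensity p) Set.univ = 1 := by
      rw [hP]
      exact measure_univ
    rwa [withDensity_apply _ MeasurableSet.univ, Measure.restrict_univ] at h1
  have hintq : ∫⁻ a, q a ∂μ = 1 := by
    have h1 : (μ.withDensity q) Set.univ = 1 := by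
      rw [hQ]
      exact measure_univ
    rwa [withDensity_apply _ MeasurableSet.univ, Measure.restrict_univ] at h1
  have hd1 : ∀ s, MeasurableSet s → ∫⁻ a in s, p a ∂μ
      ≤ ENNReal.ofReal (Real.exp ε) * ∫⁻ a in s, q a ∂μ + ENNReal.ofReal δ := by
    intro s hs
    calc ∫⁻ a in s, p a ∂μ = (μ.withDensity p) s := (withDensity_apply _ hs).symm
      _ = M d s := by rw [hP]
      _ ≤ ENNReal.ofReal (Real.exp ε) * M d' s + ENNReal.ofReal δ := hDP d d' hdd s
      _ = ENNReal.ofReal (Real.exp ε) * ∫⁻ a in s, q a ∂μ + ENNReal.ofReal δ := by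
          rw [← hQ, withDensity_apply _ hs]
  have hdd' : hammingDist d' d = 1 := by rwa [hammingDist_comm]
  have hd2 : ∀ s, MeasurableSet s → ∫⁻ a in s, q a ∂μ
      ≤ ENNReal.ofReal (Real.exp ε) * ∫⁻ a in s, p a ∂μ + ENNReal.ofReal δ := by
    intro s hs
    calc ∫⁻ a in s, q a ∂μ = (μ.withDensity q) s := (withDensity_apply _ hs).symm
      _ = M d' s := by rw [hQ]
      _ ≤ ENNReal.ofReal (Real.exp ε) * M d s + ENNReal.ofReal δ := hDP d' d hdd' s
      _ = ENNReal.ofReal (Real.exp ε) * ∫⁻ a in s, p a ∂μ + ENNReal.ofReal δ := by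
          rw [← hP, withDensity_apply _ hs]
  -- reduce to a measurable superset
  set QT := Measure.pi (fun _ : Fin T => M d') with hQT
  set S' := toMeasurable QT S with hS'
  have hsub : S ⊆ S' := subset_toMeasurable _ _
  have hms : MeasurableSet S' := measurableSet_toMeasurable _ _
  have hQS : QT S' = QT S := measure_toMeasurable S
  have hcore := core μ p q hpm hqm hpfin hqfin hintp hintq ε δ hε hδ hd1 hd2 T hT
    δ' hδ'.1 hδ'.2 S' hms
  rw [hP, hQ] at hcore
  calc Measure.pi (fun _ : Fin T => M d) S ≤ Measure.pi (fun _ : Fin T => M d) S' :=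
        measure_mono hsub
    _ ≤ ENNReal.ofReal (Real.exp (T * ε ^ 2 + ε * Real.sqrt (2 * T * Real.log (1 / δ')))) *
          Measure.pi (fun _ : Fin T => M d') S' + ENNReal.ofReal (T * δ + δ') := hcore
    _ = _ := by rw [← hQT, hQS]
end

section
/- (Reduction from hyperparameter tuning to repetition) Let K ≥ 1 be an integer and let M : D^n × [K] → probability distributions on pairs (o,v) ∈ R_o × ℝ be such that for each k ∈ [K] the mechanism d ↦ M(d,k) is ε-differentially private. Define the mechanism M' that on input d samples k uniformly at random from [K] and outputs a draw from M(d,k). Then: (i) M' is ε-differentially private; and (ii) for every dataset d, Pr[val(M'(d)) ≥ max_{k∈[K]} Median(val(M(d,k)))] ≥ 1/(2K). -/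
open MeasureTheory
open scoped ENNReal

/-- The median of the value (second coordinate) of a distribution on pairs `(o, v)`:
`Median(val(μ)) = sup {z : Pr_{(o,v) ∼ μ}[v ≥ z] ≥ 1/2}`. -/
noncomputable def medianVal {Ro : Type*} [MeasurableSpace Ro]
    (μ : Measure (Ro × ℝ)) : ℝ :=
  sSup {z : ℝ | (1 : ℝ≥0∞) / 2 ≤ μ {p | z ≤ p.2}}

lemma median_half {Ro : Type*} [MeasurableSpace Ro] (μ : Measure (Ro × ℝ))
    [IsProbabilityMeasure μ] :
    (1 : ℝ≥0∞) / 2 ≤ μ {p | medianVal μ ≤ p.2} := by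
  set A : ℝ → Set (Ro × ℝ) := fun z => {p | z ≤ p.2} with hA
  have hAmeas : ∀ z, MeasurableSet (A z) := fun z =>
    measurable_snd measurableSet_Ici
  have hAmono : ∀ {z z' : ℝ}, z ≤ z' → A z' ⊆ A z := fun h p hp => le_trans h hp
  set S := {z : ℝ | (1 : ℝ≥0∞) / 2 ≤ μ (A z)} with hS
  -- S nonempty
  have hne : S.Nonempty := by
    by_contra h
    rw [Set.not_nonempty_iff_eq_empty] at h
    have h1 : (⋃ n : ℕ, A (-(n : ℝ))) = Set.univ := by
      ext p
      simp only [Set.mem_iUnion, Set.mem_univ, iff_true]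
      obtain ⟨n, hn⟩ := exists_nat_ge (-p.2)
      exact ⟨n, by simpa [A] using neg_le.mp hn⟩
    have hmono : Monotone (fun n : ℕ => A (-(n : ℝ))) := fun a b hab =>
      hAmono (by exact_mod_cast neg_le_neg (by exact_mod_cast hab))
    have := hmono.measure_iUnion (μ := μ)
    rw [h1, measure_univ] at this
    have hle : (⨆ i : ℕ, μ (A (-(i:ℝ)))) ≤ 1/2 := by
      refine iSup_le fun (n : ℕ) => ?_
      by_contra hc
      push_neg at hc
      have hmem : (-(n:ℝ)) ∈ S := hc.le
      rw [h] at hmem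
      exact hmem
    rw [← this] at hle
    exact absurd hle (by norm_num)
  -- bounded above
  have hbdd : BddAbove S := by
    have hempty : (⋂ n : ℕ, A (n : ℝ)) = ∅ := by
      ext p
      simp only [Set.mem_iInter, Set.mem_empty_iff_false, iff_false]
      intro h
      obtain ⟨n, hn⟩ := exists_nat_gt p.2
      exact absurd (h n) (by simpa [A] using hn)
    have hanti : Antitone (fun n : ℕ => A (n : ℝ)) := fun a b hab =>
      hAmono (by exact_mod_cast hab)
    have := hanti.measure_iInter (μ := μ) (fun n => (hAmeas _).nullMeasurableSet)
      ⟨0, measure_ne_top _ _⟩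
    rw [hempty, measure_empty] at this
    have h0 : ⨅ n : ℕ, μ (A (n : ℝ)) < 1/2 := by
      rw [← this]; norm_num
    obtain ⟨n, hn⟩ := exists_lt_of_ciInf_lt h0
    refine ⟨n, fun z hz => ?_⟩
    by_contra hzn
    push_neg at hzn
    have : μ (A z) ≤ μ (A (n : ℝ)) := measure_mono (hAmono hzn.le)
    exact absurd (le_trans hz this) (not_le.mpr hn)
  -- each z < median is in the "half" region
  have hhalf : ∀ z < medianVal μ, (1 : ℝ≥0∞)/2 ≤ μ (A z) := by
    intro z hz
    obtain ⟨z', hz'S, hzz'⟩ := exists_lt_of_lt_csSup hne hz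
    exact le_trans hz'S (measure_mono (hAmono hzz'.le))
  -- A (median) = ⋂ A (median - 1/(n+1))
  have hint : A (medianVal μ) = ⋂ n : ℕ, A (medianVal μ - 1/(n+1)) := by
    ext p
    simp only [Set.mem_iInter]
    simp only [A, Set.mem_setOf_eq]
    constructor
    · intro h n
      exact le_trans (by linarith [one_div_pos.mpr (by positivity : (0:ℝ) < (n:ℝ)+1)]) h
    · intro h
      by_contra hc
      push_neg at hc
      obtain ⟨n, hn⟩ := exists_nat_one_div_lt (by linarith : (0:ℝ) < medianVal μ - p.2)
      have := h n
      linarith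
  have hanti2 : Antitone (fun n : ℕ => A (medianVal μ - 1/(n+1))) := by
    intro a b hab
    apply hAmono
    have : (1:ℝ)/(b+1) ≤ 1/(a+1) := by
      apply one_div_le_one_div_of_le (by positivity)
      exact_mod_cast by omega
    linarith
  have := hanti2.measure_iInter (μ := μ) (fun n => (hAmeas _).nullMeasurableSet)
    ⟨0, measure_ne_top _ _⟩
  rw [← hint] at this
  rw [this]
  refine le_iInf fun n => hhalf _ ?_
  have : (0:ℝ) < 1/(n+1) := by positivity
  linarith

/-- reduction from hyperparameter tuning to repetition, Proposition 2.5
with `H = [K]` and uniform `μ_H`. If `M(·, k)` is `ε`-DP for each `k ∈ [K]`, then the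
mechanism `M'` that picks `k` uniformly from `[K]` and outputs a draw from `M(d, k)` is
`ε`-DP, and for every `d`,
`Pr[val(M'(d)) ≥ max_{k ∈ [K]} Median(val(M(d,k)))] ≥ 1/(2K)`. -/
theorem stmt_19 {D Ro : Type*} [DecidableEq D] [MeasurableSpace Ro] {n K : ℕ}
    (hK : 1 ≤ K)
    (M : (Fin n → D) → Fin K → Measure (Ro × ℝ))
    [∀ d k, IsProbabilityMeasure (M d k)]
    (ε : ℝ) (hε : 0 ≤ ε)
    (hDP : ∀ k : Fin K, ∀ d d' : Fin n → D, hammingDist d d' = 1 →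
      ∀ S : Set (Ro × ℝ), M d k S ≤ ENNReal.ofReal (Real.exp ε) * M d' k S) :
    (∀ d d' : Fin n → D, hammingDist d d' = 1 →
      ∀ S : Set (Ro × ℝ),
        (∑ k : Fin K, ((K : ℝ≥0∞))⁻¹ • M d k) S ≤
          ENNReal.ofReal (Real.exp ε) * (∑ k : Fin K, ((K : ℝ≥0∞))⁻¹ • M d' k) S) ∧
    (∀ d : Fin n → D,
      (1 : ℝ≥0∞) / (2 * K) ≤
        (∑ k : Fin K, ((K : ℝ≥0∞))⁻¹ • M d k)
          {p | (⨆ k : Fin K, medianVal (M d k)) ≤ p.2}) := by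
  constructor
  · intro d d' hdd S
    rw [Measure.finset_sum_apply, Measure.finset_sum_apply, Finset.mul_sum]
    refine Finset.sum_le_sum fun k _ => ?_
    rw [Measure.smul_apply, Measure.smul_apply, smul_eq_mul, smul_eq_mul,
      ← mul_assoc, mul_comm (ENNReal.ofReal (Real.exp ε)) ((K:ℝ≥0∞))⁻¹, mul_assoc]
    exact mul_le_mul_right (hDP k d d' hdd S) _
  · intro d
    haveI : Nonempty (Fin K) := ⟨⟨0, hK⟩⟩
    obtain ⟨k₀, hk₀⟩ := Finite.exists_max (fun k => medianVal (M d k))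
    have hsup : (⨆ k : Fin K, medianVal (M d k)) = medianVal (M d k₀) :=
      le_antisymm (ciSup_le hk₀) (le_ciSup (f := fun k => medianVal (M d k)) (Set.finite_range _).bddAbove k₀)
    rw [hsup, Measure.finset_sum_apply]
    simp only [Measure.smul_apply, smul_eq_mul]
    have h1 : ((K:ℝ≥0∞))⁻¹ * ((1:ℝ≥0∞)/2) ≤
        ((K:ℝ≥0∞))⁻¹ * M d k₀ {p | medianVal (M d k₀) ≤ p.2} :=
      mul_le_mul_right (median_half (M d k₀)) _
    have h2 : ((K:ℝ≥0∞))⁻¹ * M d k₀ {p | medianVal (M d k₀) ≤ p.2} ≤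
        ∑ k : Fin K, ((K:ℝ≥0∞))⁻¹ * M d k {p | medianVal (M d k₀) ≤ p.2} :=
      Finset.single_le_sum (f := fun k => ((K:ℝ≥0∞))⁻¹ * M d k {p | medianVal (M d k₀) ≤ p.2})
        (fun k _ => zero_le) (Finset.mem_univ k₀)
    refine le_trans (le_of_eq ?_) (le_trans h1 h2)
    rw [ENNReal.div_eq_inv_mul, ENNReal.div_eq_inv_mul, mul_one,
      ENNReal.mul_inv (by norm_num) (by simp), mul_comm, mul_one]
end
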